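/- arXiv:1310.6205 — 2 statements merged into one kernel-verified Lean document; each statement's English description precedes it below -/
import Mathlib

section
/- Let T be a weighted monogamous trigraph with a switchable pair ab. Then α(T_{a→S}) = α(T_{b→S}) = α(T_{a→K}) = α(T_{b→K}) = α(T). -/
structure Trigraph (V : Type*) where
  θ : V → V → ℤ
  symm : ∀ u v, θ u v = θ v u
  range : ∀ u v, u ≠ v → θ u v = -1 ∨ θ u v = 0 ∨ θ u v = 1

namespace Trigraph

variable {V : Type*}

/-- `u` and `v` form a strong edge. -/
def SEdge (T : Trigraph V) (u v : V) : Prop := u ≠ v ∧ T.θ u v = 1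

/-- `u` and `v` form a strong antiedge. -/
def SAnti (T : Trigraph V) (u v : V) : Prop := u ≠ v ∧ T.θ u v = -1

/-- `u` and `v` form a switchable pair. -/
def Switch (T : Trigraph V) (u v : V) : Prop := u ≠ v ∧ T.θ u v = 0

/-- `u` and `v` are adjacent. -/
def Adj (T : Trigraph V) (u v : V) : Prop := u ≠ v ∧ (T.θ u v = 0 ∨ T.θ u v = 1)

/-- `u` and `v` are antiadjacent. -/
def Anti (T : Trigraph V) (u v : V) : Prop := u ≠ v ∧ (T.θ u v = -1 ∨ T.θ u v = 0)

instance [DecidableEq V] (T : Trigraph V) (u v : V) : Decidable (T.Adj u v) :=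
  inferInstanceAs (Decidable (u ≠ v ∧ (T.θ u v = 0 ∨ T.θ u v = 1)))

instance [DecidableEq V] (T : Trigraph V) (u v : V) : Decidable (T.Anti u v) :=
  inferInstanceAs (Decidable (u ≠ v ∧ (T.θ u v = -1 ∨ T.θ u v = 0)))

instance [DecidableEq V] (T : Trigraph V) (u v : V) : Decidable (T.Switch u v) :=
  inferInstanceAs (Decidable (u ≠ v ∧ T.θ u v = 0))

instance [DecidableEq V] (T : Trigraph V) (u v : V) : Decidable (T.SAnti u v) :=
  inferInstanceAs (Decidable (u ≠ v ∧ T.θ u v = -1))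

/-- A trigraph is monogamous if every vertex is in at most one switchable pair. -/
def Monogamous (T : Trigraph V) : Prop :=
  ∀ v u w : V, T.Switch v u → T.Switch v w → u = w

/-- The complement trigraph. -/
def compl (T : Trigraph V) : Trigraph V where
  θ := fun u v => -(T.θ u v)
  symm := fun u v => congrArg Neg.neg (T.symm u v)
  range := fun u v h => by
    have := T.range u v h
    omega

def IsBull (T : Trigraph V) (x1 x2 x3 y z : V) : Prop :=
  T.Adj x1 x2 ∧ T.Adj x1 x3 ∧ T.Adj x2 x3 ∧
  T.Adj y x1 ∧ T.Anti y x2 ∧ T.Anti y x3 ∧ T.Anti y z ∧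
  T.Adj z x2 ∧ T.Anti z x1 ∧ T.Anti z x3

def BullFree (T : Trigraph V) : Prop := ∀ x1 x2 x3 y z : V, ¬ T.IsBull x1 x2 x3 y z

/-- `S` is strongly complete to `A`. -/
def SComplete (T : Trigraph V) (S A : Set V) : Prop := ∀ s ∈ S, ∀ a ∈ A, T.SEdge s a

/-- `S` is strongly anticomplete to `A`. -/
def SAnticomplete (T : Trigraph V) (S A : Set V) : Prop := ∀ s ∈ S, ∀ a ∈ A, T.SAnti s a

/-- A homogeneous set. -/
def HomSet (T : Trigraph V) (X : Set V) : Prop :=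
  1 < X.ncard ∧ X.ncard < Nat.card V ∧
  ∀ v ∉ X, (∀ a ∈ X, T.SEdge v a) ∨ (∀ a ∈ X, T.SAnti v a)

/-- `(A,B,C,D,E,F)` is a split of the homogeneous pair `(A,B)`. -/
def IsSplit (T : Trigraph V) (A B C D E F : Set V) : Prop :=
  A.Nonempty ∧ B.Nonempty ∧ Disjoint A B ∧
  Disjoint C D ∧ Disjoint C E ∧ Disjoint C F ∧
  Disjoint D E ∧ Disjoint D F ∧ Disjoint E F ∧
  C ∪ D ∪ E ∪ F = (A ∪ B)ᶜ ∧
  T.SComplete A (C ∪ E) ∧ T.SAnticomplete A (D ∪ F) ∧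
  T.SComplete B (D ∪ E) ∧ T.SAnticomplete B (C ∪ F) ∧
  ¬ T.SComplete A B ∧ ¬ T.SAnticomplete A B ∧
  3 ≤ (A ∪ B).ncard ∧ 3 ≤ (C ∪ D ∪ E ∪ F).ncard

/-- `(A,B)` is a homogeneous pair. -/
def HomPair (T : Trigraph V) (A B : Set V) : Prop := ∃ C D E F, T.IsSplit A B C D E F

/-- A small homogeneous pair. -/
def SmallHomPair (T : Trigraph V) (A B : Set V) : Prop :=
  T.HomPair A B ∧ (A ∪ B).ncard ≤ 6

/-- A proper homogeneous pair. -/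
def ProperHomPair (T : Trigraph V) (A B : Set V) : Prop :=
  ∃ C D E F, T.IsSplit A B C D E F ∧ C.Nonempty ∧ D.Nonempty

/-- `(X, Xᶜ)` is a decomposition of `T`. -/
def Decomp (T : Trigraph V) (X : Set V) : Prop :=
  T.HomSet X ∨ ∃ A B, X = A ∪ B ∧ (T.SmallHomPair A B ∨ T.ProperHomPair A B)

/-- `(X, Xᶜ)` is a homogeneous cut of `T`. -/
def HomCut (T : Trigraph V) (X : Set V) : Prop :=
  T.HomSet X ∨ ∃ A B, X = A ∪ B ∧ T.ProperHomPair A B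

/-- A minimally-sided homogeneous cut. -/
def MinSidedHomCut (T : Trigraph V) (X : Set V) : Prop :=
  T.HomCut X ∧ ∀ X' : Set V, T.HomCut X' → ¬ X' ⊂ X

/-- The induced subtrigraph on `X`. -/
def induce (T : Trigraph V) (X : Set V) : Trigraph X where
  θ := fun u v => T.θ u v
  symm := fun u v => T.symm u v
  range := fun u v h => T.range u v (fun hh => h (Subtype.ext hh))

open Classical in
/-- The trigraph obtained from `T[X]` by adding two marker vertices joined by a switchable
pair, the first strongly complete to (the trace in `X` of) `P` and strongly anticomplete to
the rest of `X`, the second strongly complete to `Q` and strongly anticomplete to the rest. -/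
noncomputable def augment2 (T : Trigraph V) (X P Q : Set V) : Trigraph (↥X ⊕ Fin 2) where
  θ := fun u v =>
    match u, v with
    | Sum.inl u, Sum.inl v => T.θ u v
    | Sum.inl u, Sum.inr i => if (i = 0 ∧ (u : V) ∈ P) ∨ (i = 1 ∧ (u : V) ∈ Q) then 1 else -1
    | Sum.inr i, Sum.inl u => if (i = 0 ∧ (u : V) ∈ P) ∨ (i = 1 ∧ (u : V) ∈ Q) then 1 else -1
    | Sum.inr _, Sum.inr _ => 0
  symm := by
    rintro (u | i) (v | j)
    · exact T.symm u v
    · rfl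
    · rfl
    · rfl
  range := by
    rintro (u | i) (v | j) h
    · exact T.range u v fun hh => h (by rw [Subtype.ext hh])
    · dsimp only; split <;> simp
    · dsimp only; split <;> simp
    · simp

/-- The block of decomposition `T_X` for a proper homogeneous pair `(A,B)`:
`T[A ∪ B]` together with marker vertices `c` (strongly complete to `A`) and `d`
(strongly complete to `B`), with `cd` a switchable pair. -/
noncomputable def blockXPair (T : Trigraph V) (A B : Set V) : Trigraph (↥(A ∪ B) ⊕ Fin 2) :=
  T.augment2 (A ∪ B) A B

/-- The block of decomposition `T_Y` for a homogeneous pair `(A,B)` with split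
`(A,B,C,D,E,F)` : `T[Y]` (where `Y = (A ∪ B)ᶜ`) together with marker vertices `a`
(strongly complete to `C ∪ E`) and `b` (strongly complete to `D ∪ E`), with `ab` a
switchable pair. -/
noncomputable def blockYPair (T : Trigraph V) (A B C D E : Set V) : Trigraph (↥(A ∪ B)ᶜ ⊕ Fin 2) :=
  T.augment2 (A ∪ B)ᶜ (C ∪ E) (D ∪ E)


/-- A strong clique: vertices pairwise strongly adjacent. -/
def StrongClique (T : Trigraph V) (K : Set V) : Prop := K.Pairwise T.SEdge

/-- A strong stable set: vertices pairwise strongly antiadjacent. -/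
def StrongStable (T : Trigraph V) (K : Set V) : Prop := K.Pairwise T.SAnti

/-- `T[X]` is triangle-free. -/
def TriangleFreeOn (T : Trigraph V) (X : Set V) : Prop :=
  ∀ x ∈ X, ∀ y ∈ X, ∀ z ∈ X, ¬ (T.Adj x y ∧ T.Adj x z ∧ T.Adj y z)

/-- Membership in the basic class `𝒯₁`. -/
def InT1 (T : Trigraph V) : Prop :=
  T.Monogamous ∧ ∃ (X : Set V) (t : ℕ) (K : Fin t → Set V),
    (X ∪ ⋃ i, K i) = Set.univ ∧
    (∀ i, Disjoint X (K i)) ∧ (∀ i j, i ≠ j → Disjoint (K i) (K j)) ∧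
    T.TriangleFreeOn X ∧ (∀ i, T.StrongClique (K i)) ∧
    (∀ i j, i ≠ j → T.SAnticomplete (K i) (K j)) ∧
    (∀ i, ∀ v ∈ K i, ∃ A B : Set V,
      A ∪ B = {x ∈ X | T.Adj v x} ∧ Disjoint A B ∧
      T.StrongStable A ∧ T.StrongStable B ∧ T.SComplete A B)

/-- Membership in the basic class `𝒯₀`: monogamous trigraphs on at most 8 vertices. -/
def InT0 (T : Trigraph V) : Prop := T.Monogamous ∧ Nat.card V ≤ 8

/-- A basic trigraph: a member of `𝒯₀ ∪ 𝒯₁ ∪ 𝒯₁bar`. -/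
def Basic (T : Trigraph V) : Prop := T.InT0 ∨ T.InT1 ∨ T.compl.InT1

/-- `h` lists the vertices of a hole of length `k` in `T`. -/
def IsHole (T : Trigraph V) (k : ℕ) (h : Fin k → V) : Prop :=
  4 ≤ k ∧ Function.Injective h ∧ ∀ i j : Fin k,
    (((i.val + 1) % k = j.val ∨ (j.val + 1) % k = i.val) → T.Adj (h i) (h j)) ∧
    (i ≠ j → ¬ ((i.val + 1) % k = j.val ∨ (j.val + 1) % k = i.val) → T.Anti (h i) (h j))

def HasOddHole (T : Trigraph V) : Prop := ∃ k, Odd k ∧ ∃ h : Fin k → V, T.IsHole k h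

/-- A Berge trigraph: no odd hole and no odd antihole. -/
def Berge (T : Trigraph V) : Prop := ¬ T.HasOddHole ∧ ¬ T.compl.HasOddHole

/-- `(wv, we)` are legitimate weights for the trigraph `T`: `we` is symmetric and for every
switchable pair `uv` we have `max (wv u) (wv v) ≤ we u v ≤ wv u + wv v`. -/
def GoodWeights (T : Trigraph V) (wv : V → ℕ) (we : V → V → ℕ) : Prop :=
  (∀ u v, we u v = we v u) ∧
  ∀ u v, T.Switch u v → max (wv u) (wv v) ≤ we u v ∧ we u v ≤ wv u + wv v

/-- `S` is a stable set of `T`. -/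
def StableF (T : Trigraph V) (S : Finset V) : Prop :=
  ∀ u ∈ S, ∀ v ∈ S, u ≠ v → T.Anti u v

open Classical in
/-- The weight of a stable set `S`: the sum of the weights of the vertices of `S` that are
strongly antiadjacent to every other vertex of `S`, plus the sum of the weights of the
switchable pairs with both ends in `S`. -/
noncomputable def weightF (T : Trigraph V) (wv : V → ℕ) (we : V → V → ℕ) (S : Finset V) : ℕ :=
  (∑ v ∈ S.filter (fun v => ∀ u ∈ S, u ≠ v → T.SAnti u v), wv v)
    + (∑ u ∈ S, ∑ v ∈ S, if T.Switch u v then we u v else 0) / 2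

open Classical in
/-- The maximum weight of a stable set of `T` contained in `X`. -/
noncomputable def alphaOn [Fintype V] (T : Trigraph V) (wv : V → ℕ) (we : V → V → ℕ)
    (X : Set V) : ℕ :=
  (Finset.univ.powerset.filter fun S : Finset V => ↑S ⊆ X ∧ T.StableF S).sup (T.weightF wv we)

/-- The maximum weight of a stable set of `T`. -/
noncomputable def alphaW [Fintype V] (T : Trigraph V) (wv : V → ℕ) (we : V → V → ℕ) : ℕ :=
  T.alphaOn wv we Set.univ

open Classical in
/-- The trigraph `T_{a → S}` obtained from `T` by turning the switchable pair `ab` into a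
strong edge and adding a new vertex `a' = none` strongly complete to `N(a) ∖ {b}` and
strongly anticomplete to everything else (including `a`). -/
noncomputable def expandS (T : Trigraph V) (a b : V) : Trigraph (Option V) where
  θ := fun u v =>
    match u, v with
    | some u, some v => if (u = a ∧ v = b) ∨ (u = b ∧ v = a) then 1 else T.θ u v
    | some u, none => if T.Adj a u ∧ u ≠ b then 1 else -1
    | none, some v => if T.Adj a v ∧ v ≠ b then 1 else -1
    | none, none => -1
  symm := by
    rintro (_ | u) (_ | v)
    · rfl
    · rfl
    · rfl
    · dsimp only
      have hiff : ((u = a ∧ v = b) ∨ (u = b ∧ v = a)) ↔ ((v = a ∧ u = b) ∨ (v = b ∧ u = a)) := by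
        tauto
      rw [if_congr hiff rfl (T.symm u v)]
  range := by
    rintro (_ | u) (_ | v) h
    · exact absurd rfl h
    · dsimp only; split <;> simp
    · dsimp only; split <;> simp
    · dsimp only
      split
      · simp
      · exact T.range u v fun hh => h (by rw [hh])

open Classical in
/-- The trigraph `T_{a → K}`, defined like `T_{a → S}` except that the new vertex `a'` is in
addition strongly adjacent to `a`. -/
noncomputable def expandK (T : Trigraph V) (a b : V) : Trigraph (Option V) where
  θ := fun u v =>
    match u, v with
    | some u, some v => if (u = a ∧ v = b) ∨ (u = b ∧ v = a) then 1 else T.θ u v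
    | some u, none => if (T.Adj a u ∧ u ≠ b) ∨ u = a then 1 else -1
    | none, some v => if (T.Adj a v ∧ v ≠ b) ∨ v = a then 1 else -1
    | none, none => -1
  symm := by
    rintro (_ | u) (_ | v)
    · rfl
    · rfl
    · rfl
    · dsimp only
      have hiff : ((u = a ∧ v = b) ∨ (u = b ∧ v = a)) ↔ ((v = a ∧ u = b) ∨ (v = b ∧ u = a)) := by
        tauto
      rw [if_congr hiff rfl (T.symm u v)]
  range := by
    rintro (_ | u) (_ | v) h
    · exact absurd rfl h
    · dsimp only; split <;> simp
    · dsimp only; split <;> simp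
    · dsimp only
      split
      · simp
      · exact T.range u v fun hh => h (by rw [hh])

/-- Vertex weights for `T_{a → S}`. -/
def wvS (wv : V → ℕ) (we : V → V → ℕ) (a b : V) [DecidableEq V] : Option V → ℕ
  | some v => if v = a then wv a + wv b - we a b else wv v
  | none => we a b - wv b

/-- Vertex weights for `T_{a → K}`. -/
def wvK (wv : V → ℕ) (we : V → V → ℕ) (a b : V) : Option V → ℕ
  | some v => wv v
  | none => we a b - wv b

/-- Switchable-pair weights for `T_{a → S}` and `T_{a → K}`. -/
def weO (we : V → V → ℕ) : Option V → Option V → ℕ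
  | some u, some v => we u v
  | _, _ => 0

end Trigraph



namespace Trigraph

variable {V : Type*}

-- helper lemmas
lemma SAnti.symm2 {T : Trigraph V} {u v : V} (h : T.SAnti u v) : T.SAnti v u :=
  ⟨h.1.symm, by rw [T.symm]; exact h.2⟩

lemma Switch.symm2 {T : Trigraph V} {u v : V} (h : T.Switch u v) : T.Switch v u :=
  ⟨h.1.symm, by rw [T.symm]; exact h.2⟩

lemma Anti.symm2 {T : Trigraph V} {u v : V} (h : T.Anti u v) : T.Anti v u :=
  ⟨h.1.symm, by rw [T.symm]; rcases h.2 with h' | h' <;> [exact Or.inl h'; exact Or.inr h']⟩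

lemma SAnti.not_switch {T : Trigraph V} {u v : V} (h : T.SAnti u v) : ¬ T.Switch u v :=
  fun hs => by have := h.2; rw [hs.2] at this; exact absurd this (by norm_num)

lemma Anti.sAnti_of_not_switch {T : Trigraph V} {u v : V} (h : T.Anti u v)
    (hs : ¬ T.Switch u v) : T.SAnti u v := by
  rcases h.2 with h' | h'
  · exact ⟨h.1, h'⟩
  · exact absurd ⟨h.1, h'⟩ hs

lemma stableF_insert [DecidableEq V] {T : Trigraph V} {S : Finset V} {x : V} (hS : T.StableF S)
    (hx : ∀ u ∈ S, T.Anti x u) : T.StableF (insert x S) := by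
  intro u hu v hv huv
  simp only [Finset.mem_insert] at hu hv
  rcases hu with rfl | hu
  · rcases hv with rfl | hv
    · exact absurd rfl huv
    · exact hx v hv
  · rcases hv with rfl | hv
    · exact (hx u hu).symm2
    · exact hS u hu v hv huv



open Classical in
lemma weightF_def [DecidableEq V] (T : Trigraph V) (wv : V → ℕ) (we : V → V → ℕ)
    (S : Finset V) :
    T.weightF wv we S
      = (∑ v ∈ S.filter (fun v => ∀ u ∈ S, u ≠ v → T.SAnti u v), wv v)
        + (∑ u ∈ S, ∑ v ∈ S, if T.Switch u v then we u v else 0) / 2 := by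
  unfold weightF
  congr!

open Finset Classical in
lemma weightF_insert_strong [DecidableEq V] (T : Trigraph V) (wv : V → ℕ) (we : V → V → ℕ)
    {x : V} {S : Finset V} (hx : x ∉ S) (h : ∀ u ∈ S, T.SAnti x u) :
    T.weightF wv we (insert x S) = T.weightF wv we S + wv x := by
  simp only [weightF_def]
  have hfil : (insert x S).filter (fun v => ∀ u ∈ insert x S, u ≠ v → T.SAnti u v)
      = insert x (S.filter (fun v => ∀ u ∈ S, u ≠ v → T.SAnti u v)) := by
    ext v
    simp only [Finset.mem_filter, Finset.mem_insert]
    constructor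
    · rintro ⟨rfl | hv, hall⟩
      · exact Or.inl rfl
      · exact Or.inr ⟨hv, fun u hu huv => hall u (Or.inr hu) huv⟩
    · rintro (rfl | ⟨hv, hall⟩)
      · refine ⟨Or.inl rfl, ?_⟩
        rintro u (rfl | hu) huv
        · exact absurd rfl huv
        · exact (h u hu).symm2
      · refine ⟨Or.inr hv, ?_⟩
        rintro u (rfl | hu) huv
        · exact h v hv
        · exact hall u hu huv
  have hxf : x ∉ S.filter (fun v => ∀ u ∈ S, u ≠ v → T.SAnti u v) :=
    fun hh => hx (Finset.mem_filter.mp hh).1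
  have hzero : ∀ v ∈ insert x S, (if T.Switch x v then we x v else 0) = 0 := by
    rintro v hv
    rw [if_neg]
    rcases Finset.mem_insert.mp hv with rfl | hv
    · exact fun hs => hs.1 rfl
    · exact (h v hv).not_switch
  have hzero' : ∀ u ∈ S, (if T.Switch u x then we u x else 0) = 0 := by
    intro u hu
    rw [if_neg (fun hs => (h u hu).symm2.not_switch hs)]
  have hpair : (∑ u ∈ insert x S, ∑ v ∈ insert x S, if T.Switch u v then we u v else 0)
      = ∑ u ∈ S, ∑ v ∈ S, if T.Switch u v then we u v else 0 := by
    rw [Finset.sum_insert hx]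
    rw [Finset.sum_eq_zero hzero, zero_add]
    refine Finset.sum_congr rfl fun u hu => ?_
    rw [Finset.sum_insert hx, hzero' u hu, zero_add]
  rw [hfil, Finset.sum_insert hxf, hpair]
  omega

open Finset Classical in
lemma weightF_insert_switch [DecidableEq V] (T : Trigraph V) (wv : V → ℕ) (we : V → V → ℕ)
    (hsym : ∀ u v, we u v = we v u)
    {x y : V} {S : Finset V} (hx : x ∉ S) (hy : y ∈ S) (hxy : T.Switch x y)
    (h : ∀ u ∈ S, u ≠ y → T.SAnti x u) (hyS : ∀ u ∈ S, u ≠ y → T.SAnti y u) :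
    T.weightF wv we (insert x S) + wv y = T.weightF wv we S + we x y := by
  simp only [weightF_def]
  have hnxy : ¬ T.SAnti x y := fun hs => by
    have := hs.2; rw [hxy.2] at this; exact absurd this (by norm_num)
  -- x is SAnti to u ∈ S iff u ≠ y
  have hfil : (insert x S).filter (fun v => ∀ u ∈ insert x S, u ≠ v → T.SAnti u v)
      = (S.filter (fun v => ∀ u ∈ S, u ≠ v → T.SAnti u v)).erase y := by
    ext v
    simp only [Finset.mem_erase, Finset.mem_filter, Finset.mem_insert]
    constructor
    · rintro ⟨rfl | hv, hall⟩
      · exact absurd (hall y (Or.inr hy) hxy.1.symm) (fun hs => hnxy hs.symm2)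
      · have hvy : v ≠ y := by
          rintro rfl
          exact hnxy (hall x (Or.inl rfl) (fun hh => hx (hh ▸ hv)))
        exact ⟨hvy, hv, fun u hu huv => hall u (Or.inr hu) huv⟩
    · rintro ⟨hvy, hv, hall⟩
      refine ⟨Or.inr hv, ?_⟩
      rintro u (rfl | hu) huv
      · exact h v hv hvy
      · exact hall u hu huv
  have hyfil : y ∈ S.filter (fun v => ∀ u ∈ S, u ≠ v → T.SAnti u v) :=
    Finset.mem_filter.mpr ⟨hy, fun u hu huy => (hyS u hu huy).symm2⟩
  have hpair : (∑ u ∈ insert x S, ∑ v ∈ insert x S, if T.Switch u v then we u v else 0)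
      = (∑ u ∈ S, ∑ v ∈ S, if T.Switch u v then we u v else 0) + 2 * we x y := by
    rw [Finset.sum_insert hx]
    have h1 : (∑ v ∈ insert x S, if T.Switch x v then we x v else 0) = we x y := by
      rw [Finset.sum_insert hx, if_neg (fun hs => hs.1 rfl), zero_add]
      rw [Finset.sum_eq_single_of_mem y hy]
      · rw [if_pos hxy]
      · intro u hu huy
        rw [if_neg (fun hs => (h u hu huy).not_switch hs)]
    have h2 : ∀ u ∈ S, (∑ v ∈ insert x S, if T.Switch u v then we u v else 0)
        = (∑ v ∈ S, if T.Switch u v then we u v else 0)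
          + (if u = y then we x y else 0) := by
      intro u hu
      rw [Finset.sum_insert hx]
      by_cases huy : u = y
      · subst huy
        rw [if_pos rfl, if_pos hxy.symm2, hsym u x, add_comm]
      · rw [if_neg huy, if_neg (fun hs => (h u hu huy).symm2.not_switch hs), zero_add,
          add_zero]
    rw [h1, Finset.sum_congr rfl h2, Finset.sum_add_distrib,
      Finset.sum_ite_eq' S y (fun _ => we x y), if_pos hy]
    ring
  rw [hfil, hpair]
  have hsum := Finset.sum_erase_add _ wv hyfil
  omega


open Finset Classical in
lemma weightF_map {V' : Type*} [DecidableEq V] [DecidableEq V'] (T : Trigraph V)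
    (T' : Trigraph V') (e : V ↪ V') (wv : V → ℕ) (we : V → V → ℕ)
    (wv' : V' → ℕ) (we' : V' → V' → ℕ) (S : Finset V)
    (hθ : ∀ u ∈ S, ∀ v ∈ S, T'.θ (e u) (e v) = T.θ u v)
    (hv : ∀ v ∈ S, wv' (e v) = wv v)
    (he : ∀ u ∈ S, ∀ v ∈ S, we' (e u) (e v) = we u v) :
    T'.weightF wv' we' (S.map e) = T.weightF wv we S := by
  simp only [weightF_def]
  have hSA : ∀ u ∈ S, ∀ v ∈ S, (T'.SAnti (e u) (e v) ↔ T.SAnti u v) := by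
    intro u hu v hv'
    unfold SAnti
    rw [hθ u hu v hv']
    constructor
    · rintro ⟨hne, h2⟩; exact ⟨fun hh => hne (hh ▸ rfl), h2⟩
    · rintro ⟨hne, h2⟩; exact ⟨fun hh => hne (e.injective hh), h2⟩
  have hSW : ∀ u ∈ S, ∀ v ∈ S, (T'.Switch (e u) (e v) ↔ T.Switch u v) := by
    intro u hu v hv'
    unfold Switch
    rw [hθ u hu v hv']
    constructor
    · rintro ⟨hne, h2⟩; exact ⟨fun hh => hne (hh ▸ rfl), h2⟩
    · rintro ⟨hne, h2⟩; exact ⟨fun hh => hne (e.injective hh), h2⟩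
  congr 1
  · rw [Finset.filter_map, Finset.sum_map]
    refine Finset.sum_congr (Finset.filter_congr ?_) fun v hv' => hv v (Finset.mem_filter.mp hv').1
    intro v hv'
    simp only [Function.comp_apply]
    constructor
    · intro hall u hu hne
      have := hall (e u) (Finset.mem_map_of_mem e hu) (fun hh => hne (e.injective hh))
      exact (hSA u hu v hv').mp this
    · intro hall u' hu' hne
      rcases Finset.mem_map.mp hu' with ⟨x, hx, rfl⟩
      exact (hSA x hx v hv').mpr (hall x hx (fun hh => hne (congrArg e hh)))
  · congr 1
    rw [Finset.sum_map]
    refine Finset.sum_congr rfl fun u hu => ?_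
    rw [Finset.sum_map]
    refine Finset.sum_congr rfl fun v hv' => ?_
    rw [if_congr (hSW u hu v hv') (he u hu v hv') rfl]

open Finset Classical in
lemma stableF_map {V' : Type*} (T : Trigraph V) (T' : Trigraph V') (e : V ↪ V')
    (S : Finset V) (hθ : ∀ u ∈ S, ∀ v ∈ S, T'.θ (e u) (e v) = T.θ u v)
    (hS : T.StableF S) : T'.StableF (S.map e) := by
  intro u hu v hv huv
  rcases Finset.mem_map.mp hu with ⟨u0, hu0, rfl⟩
  rcases Finset.mem_map.mp hv with ⟨v0, hv0, rfl⟩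
  have hne : u0 ≠ v0 := fun hh => huv (hh ▸ rfl)
  have := hS u0 hu0 v0 hv0 hne
  exact ⟨huv, by rw [hθ u0 hu0 v0 hv0]; exact this.2⟩


open Classical in
lemma le_alphaW [Fintype V] (T : Trigraph V) (wv : V → ℕ) (we : V → V → ℕ)
    {S : Finset V} (hS : T.StableF S) : T.weightF wv we S ≤ T.alphaW wv we := by
  unfold alphaW alphaOn
  exact Finset.le_sup (Finset.mem_filter.mpr
    ⟨Finset.mem_powerset.mpr (Finset.subset_univ S), by simp, hS⟩)

open Classical in
lemma alphaW_le [Fintype V] (T : Trigraph V) (wv : V → ℕ) (we : V → V → ℕ) {m : ℕ}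
    (h : ∀ S : Finset V, T.StableF S → T.weightF wv we S ≤ m) : T.alphaW wv we ≤ m := by
  unfold alphaW alphaOn
  exact Finset.sup_le fun S hS => h S (Finset.mem_filter.mp hS).2.2

end Trigraph


namespace Trigraph

open Finset Function Classical in
lemma expandS_alpha {V : Type} [Fintype V] [DecidableEq V] (T : Trigraph V)
    (hmono : T.Monogamous) (wv : V → ℕ) (we : V → V → ℕ) (hw : T.GoodWeights wv we)
    (a b : V) (hab : T.Switch a b) :
    (T.expandS a b).alphaW (wvS wv we a b) (weO we) = T.alphaW wv we := by
  have hne : a ≠ b := hab.1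
  obtain ⟨hle1, hle2⟩ := hw.2 a b hab
  have hwa : wv a ≤ we a b := le_trans (le_max_left _ _) hle1
  have hwb : wv b ≤ we a b := le_trans (le_max_right _ _) hle1
  have mono_a : ∀ u, T.Switch a u → u = b := fun u h => hmono a u b h hab
  have mono_b : ∀ u, T.Switch b u → u = a := fun u h => hmono b u a h hab.symm2
  have sAnti_a : ∀ u, u ≠ a → u ≠ b → T.Anti a u → T.SAnti a u := fun u hua hub h =>
    h.sAnti_of_not_switch (fun hs => hub (mono_a u hs))
  have sAnti_b : ∀ u, u ≠ a → u ≠ b → T.Anti b u → T.SAnti b u := fun u hua hub h =>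
    h.sAnti_of_not_switch (fun hs => hua (mono_b u hs))
  -- θ facts for (T.expandS a b)
  have hθss : ∀ u v : V, ¬(u = a ∧ v = b) → ¬(u = b ∧ v = a) →
      (T.expandS a b).θ (some u) (some v) = T.θ u v := by
    intro u v h1 h2
    simp only [expandS]
    rw [if_neg (by tauto)]
  have hθab' : (T.expandS a b).θ (some a) (some b) = 1 := by
    simp only [expandS]
    rw [if_pos (by tauto)]
  have hθan : (T.expandS a b).θ (some a) none = -1 := by
    simp only [expandS]
    rw [if_neg (by rintro ⟨⟨h, _⟩, _⟩; exact h rfl)]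
  have hθbn : (T.expandS a b).θ (some b) none = -1 := by
    simp only [expandS]
    rw [if_neg (by rintro ⟨_, h⟩; exact h rfl)]
  have hθnu : ∀ u : V, ¬ T.Adj a u ∨ u = b → (T.expandS a b).θ none (some u) = -1 := by
    intro u hu
    simp only [expandS]
    rw [if_neg (by tauto)]
  have hθnu' : ∀ u : V, T.SAnti a u → (T.expandS a b).θ none (some u) = -1 := by
    intro u hu
    exact hθnu u (Or.inl (fun hadj => by
      rcases hadj.2 with h | h <;> rw [hu.2] at h <;> exact absurd h (by norm_num)))
  -- no switchable pair of (T.expandS a b) touches some a, some b, none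
  have hnosw : ∀ x y : Option V, x ≠ y →
      (x = some a ∨ x = some b ∨ x = none) → (T.expandS a b).θ x y ≠ 0 := by
    rintro x y hxy (rfl | rfl | rfl)
    · match y with
      | none => rw [hθan]; norm_num
      | some v =>
        have hva : v ≠ a := fun h => hxy (by rw [h])
        by_cases hvb : v = b
        · rw [hvb, hθab']; norm_num
        · rw [hθss a v (fun h => hvb h.2) (fun h => hne h.1)]
          exact fun h0 => hvb (mono_a v ⟨fun h => hva h.symm, h0⟩)
    · match y with
      | none => rw [hθbn]; norm_num
      | some v =>
        have hvb : v ≠ b := fun h => hxy (by rw [h])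
        by_cases hva : v = a
        · rw [hva]
          simp only [expandS]
          rw [if_pos (by tauto)]; norm_num
        · rw [hθss b v (fun h => hne.symm h.1) (fun h => hva h.2)]
          exact fun h0 => hva (mono_b v ⟨fun h => hvb h.symm, h0⟩)
    · match y with
      | none => exact absurd rfl hxy
      | some v =>
        simp only [expandS]
        split <;> norm_num
  -- weights of the special vertices
  have hwva : wvS wv we a b (some a) = wv a + wv b - we a b := by simp [wvS]
  have hwvb : wvS wv we a b (some b) = wv b := by simp [wvS, hne.symm]
  have hwvn : wvS wv we a b none = we a b - wv b := rfl
  have hwvs : ∀ v : V, v ≠ a → wvS wv we a b (some v) = wv v := by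
    intro v hv; simp [wvS, hv]
  refine le_antisymm (alphaW_le _ _ _ fun S' hS' => ?_) (alphaW_le _ _ _ fun S hS => ?_)
  · -- α((T.expandS a b)) ≤ α(T)
    have hsan : ∀ x ∈ S', ∀ y ∈ S', x ≠ y → (x = some a ∨ x = some b ∨ x = none) →
        (T.expandS a b).SAnti x y := fun x hx y hy hxy hflag =>
      (hS' x hx y hy hxy).sAnti_of_not_switch (fun hs => hnosw x y hxy hflag hs.2)
    set S0 : Finset V := ((S'.erase (some a)).erase (some b)).filterMap id
      (by intro x y v hx hy
          rw [Option.mem_def] at hx hy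
          rw [show x = some v from hx, show y = some v from hy]) with hS0
    have hmem0 : ∀ v : V, v ∈ S0 ↔ some v ∈ S' ∧ v ≠ a ∧ v ≠ b := by
      intro v
      rw [hS0]
      simp only [Finset.mem_filterMap, Finset.mem_erase, Option.mem_def, id]
      constructor
      · rintro ⟨x, ⟨hxb, hxa, hxS⟩, rfl⟩
        exact ⟨hxS, fun h => hxa (by rw [h]), fun h => hxb (by rw [h])⟩
      · rintro ⟨h1, h2, h3⟩
        exact ⟨some v, ⟨by simpa using h3, by simpa using h2, h1⟩, rfl⟩
    have ha0 : a ∉ S0 := fun h => ((hmem0 a).mp h).2.1 rfl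
    have hb0 : b ∉ S0 := fun h => ((hmem0 b).mp h).2.2 rfl
    have hsub : ∀ x ∈ S0.map Embedding.some, x ∈ S' := by
      intro x hx
      rcases Finset.mem_map.mp hx with ⟨v, hv, rfl⟩
      exact ((hmem0 v).mp hv).1
    have hsplit : ∀ x ∈ S', x = some a ∨ x = some b ∨ x = none ∨
        x ∈ S0.map Embedding.some := by
      intro x hx
      match x with
      | none => exact Or.inr (Or.inr (Or.inl rfl))
      | some v =>
        by_cases hva : v = a
        · exact Or.inl (by rw [hva])
        by_cases hvb : v = b
        · exact Or.inr (Or.inl (by rw [hvb]))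
        exact Or.inr (Or.inr (Or.inr (Finset.mem_map_of_mem _
          ((hmem0 v).mpr ⟨hx, hva, hvb⟩))))
    have hnomap : ∀ v : V, v ∉ S0 → some v ∉ S0.map Embedding.some := by
      intro v hv h
      rcases Finset.mem_map.mp h with ⟨u, hu, huv⟩
      rw [show u = v from Option.some_injective V huv] at hu
      exact hv hu
    have hnone : (none : Option V) ∉ S0.map Embedding.some := by
      intro h
      rcases Finset.mem_map.mp h with ⟨u, _, huv⟩
      exact Option.some_ne_none u huv
    have hstab0 : T.StableF S0 := by
      intro u hu v hv huv
      have h1 := ((hmem0 u).mp hu)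
      have h2 := ((hmem0 v).mp hv)
      have := hS' (some u) h1.1 (some v) h2.1 (fun h => huv (Option.some_injective V h))
      exact ⟨huv, by
        rw [← hθss u v (fun h => h2.2.2 h.2) (fun h => h2.2.1 h.2)]
        exact this.2⟩
    have htrans : (T.expandS a b).weightF (wvS wv we a b) (weO we) (S0.map Embedding.some)
        = T.weightF wv we S0 := by
      refine weightF_map T (T.expandS a b) _ wv we _ _ S0 ?_ ?_ ?_
      · intro u hu v hv
        exact hθss u v (fun h => ((hmem0 u).mp hu).2.1 h.1)
          (fun h => ((hmem0 u).mp hu).2.2 h.1)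
      · intro v hv
        exact hwvs v ((hmem0 v).mp hv).2.1
      · intro u _ v _; rfl
    have hstabmap : T.StableF S0 := hstab0
    have hW0 := le_alphaW T wv we hstab0
    by_cases pa : some a ∈ S'
    · by_cases pb : some b ∈ S'
      · exfalso
        have := hS' (some a) pa (some b) pb (by simp [hne])
        rcases this.2 with h | h <;> rw [hθab'] at h <;> norm_num at h
      by_cases pn : (none : Option V) ∈ S'
      · -- a, a' ∈ S'
        have heq : S' = insert (some a) (insert none (S0.map Embedding.some)) := by
          ext x
          simp only [Finset.mem_insert]
          constructor
          · intro hx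
            rcases hsplit x hx with h | h | h | h
            · exact Or.inl h
            · exact absurd (h ▸ hx) pb
            · exact Or.inr (Or.inl h)
            · exact Or.inr (Or.inr h)
          · rintro (rfl | rfl | h)
            · exact pa
            · exact pn
            · exact hsub x h
        have hin1 : (none : Option V) ∉ S0.map Embedding.some := hnone
        have h1 : (T.expandS a b).weightF (wvS wv we a b) (weO we) (insert none (S0.map Embedding.some))
            = T.weightF wv we S0 + (we a b - wv b) := by
          rw [weightF_insert_strong _ _ _ hin1
            (fun u hu => hsan none pn u (hsub u hu)
              (by rcases Finset.mem_map.mp hu with ⟨v, _, rfl⟩; simp)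
              (Or.inr (Or.inr rfl))), htrans, hwvn]
        have hin2 : some a ∉ insert none (S0.map Embedding.some) := by
          simp only [Finset.mem_insert]
          rintro (h | h)
          · exact Option.some_ne_none a h
          · exact hnomap a ha0 h
        have h2 : (T.expandS a b).weightF (wvS wv we a b) (weO we) S'
            = T.weightF wv we S0 + (we a b - wv b) + (wv a + wv b - we a b) := by
          rw [heq, weightF_insert_strong _ _ _ hin2 ?_, h1, hwva]
          intro u hu
          rcases Finset.mem_insert.mp hu with rfl | hu
          · exact hsan (some a) pa none pn (by simp) (Or.inl rfl)
          · exact hsan (some a) pa u (hsub u hu)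
              (by rcases Finset.mem_map.mp hu with ⟨v, hv, rfl⟩
                  exact fun h => ha0 ((Option.some_injective V h).symm ▸ hv)) (Or.inl rfl)
        have hstabS : T.StableF (insert a S0) := by
          refine stableF_insert hstab0 fun u hu => ?_
          have := hsan (some a) pa (some u) ((hmem0 u).mp hu).1
            (by simp only [ne_eq, Option.some.injEq]; exact fun h => ha0 (h ▸ hu)) (Or.inl rfl)
          refine ⟨fun h => this.1 (congrArg some h), Or.inl ?_⟩
          rw [← hθss a u (fun h => ((hmem0 u).mp hu).2.2 h.2) (fun h => hne h.1)]
          exact this.2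
        have h3 : T.weightF wv we (insert a S0) = T.weightF wv we S0 + wv a := by
          refine weightF_insert_strong _ _ _ ha0 fun u hu => ?_
          exact sAnti_a u (fun h => ha0 (h ▸ hu)) (fun h => hb0 (h ▸ hu))
            (hstabS a (Finset.mem_insert_self a S0) u (Finset.mem_insert_of_mem hu)
              (fun h => ha0 (h ▸ hu))).symm2.symm2
        have h4 := le_alphaW T wv we hstabS
        omega
      · -- only a ∈ S'
        have heq : S' = insert (some a) (S0.map Embedding.some) := by
          ext x
          simp only [Finset.mem_insert]
          constructor
          · intro hx
            rcases hsplit x hx with h | h | h | h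
            · exact Or.inl h
            · exact absurd (h ▸ hx) pb
            · exact absurd (h ▸ hx) pn
            · exact Or.inr h
          · rintro (rfl | h)
            · exact pa
            · exact hsub x h
        have hin2 : some a ∉ S0.map Embedding.some := hnomap a ha0
        have h2 : (T.expandS a b).weightF (wvS wv we a b) (weO we) S'
            = T.weightF wv we S0 + (wv a + wv b - we a b) := by
          rw [heq, weightF_insert_strong _ _ _ hin2 ?_, htrans, hwva]
          intro u hu
          exact hsan (some a) pa u (hsub u hu)
            (by rcases Finset.mem_map.mp hu with ⟨v, hv, rfl⟩
                exact fun h => ha0 ((Option.some_injective V h).symm ▸ hv)) (Or.inl rfl)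
        have hstabS : T.StableF (insert a S0) := by
          refine stableF_insert hstab0 fun u hu => ?_
          have := hsan (some a) pa (some u) ((hmem0 u).mp hu).1
            (by simp only [ne_eq, Option.some.injEq]; exact fun h => ha0 (h ▸ hu)) (Or.inl rfl)
          refine ⟨fun h => this.1 (congrArg some h), Or.inl ?_⟩
          rw [← hθss a u (fun h => ((hmem0 u).mp hu).2.2 h.2) (fun h => hne h.1)]
          exact this.2
        have h3 : T.weightF wv we (insert a S0) = T.weightF wv we S0 + wv a := by
          refine weightF_insert_strong _ _ _ ha0 fun u hu => ?_
          exact sAnti_a u (fun h => ha0 (h ▸ hu)) (fun h => hb0 (h ▸ hu))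
            (hstabS a (Finset.mem_insert_self a S0) u (Finset.mem_insert_of_mem hu)
              (fun h => ha0 (h ▸ hu)))
        have h4 := le_alphaW T wv we hstabS
        omega
    · by_cases pb : some b ∈ S'
      · by_cases pn : (none : Option V) ∈ S'
        · -- b, a' ∈ S' : compare with S0 ∪ {a, b}
          have heq : S' = insert (some b) (insert none (S0.map Embedding.some)) := by
            ext x
            simp only [Finset.mem_insert]
            constructor
            · intro hx
              rcases hsplit x hx with h | h | h | h
              · exact absurd (h ▸ hx) pa
              · exact Or.inl h
              · exact Or.inr (Or.inl h)
              · exact Or.inr (Or.inr h)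
            · rintro (rfl | rfl | h)
              · exact pb
              · exact pn
              · exact hsub x h
          have h1 : (T.expandS a b).weightF (wvS wv we a b) (weO we) (insert none (S0.map Embedding.some))
              = T.weightF wv we S0 + (we a b - wv b) := by
            rw [weightF_insert_strong _ _ _ hnone
              (fun u hu => hsan none pn u (hsub u hu)
                (by rcases Finset.mem_map.mp hu with ⟨v, _, rfl⟩; simp)
                (Or.inr (Or.inr rfl))), htrans, hwvn]
          have hin2 : some b ∉ insert none (S0.map Embedding.some) := by
            simp only [Finset.mem_insert]
            rintro (h | h)
            · exact Option.some_ne_none b h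
            · exact hnomap b hb0 h
          have h2 : (T.expandS a b).weightF (wvS wv we a b) (weO we) S'
              = T.weightF wv we S0 + (we a b - wv b) + wv b := by
            rw [heq, weightF_insert_strong _ _ _ hin2 ?_, h1, hwvb]
            intro u hu
            rcases Finset.mem_insert.mp hu with rfl | hu
            · exact hsan (some b) pb none pn (by simp) (Or.inr (Or.inl rfl))
            · exact hsan (some b) pb u (hsub u hu)
                (by rcases Finset.mem_map.mp hu with ⟨v, hv, rfl⟩
                    exact fun h => hb0 ((Option.some_injective V h).symm ▸ hv)) (Or.inr (Or.inl rfl))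
          -- S = insert a (insert b S0)
          have hsab : ∀ u ∈ S0, T.SAnti a u := by
            intro u hu
            have h0 := ((hmem0 u).mp hu)
            have hanti : ¬ (T.Adj a u ∧ u ≠ b) := by
              intro hc
              have hth : (T.expandS a b).θ none (some u) = 1 := by
                simp only [expandS]
                rw [if_pos hc]
              have h2 := hsan none pn (some u) h0.1 (by simp) (Or.inr (Or.inr rfl))
              have h3 := h2.2
              rw [hth] at h3
              norm_num at h3
            refine ⟨fun h => h0.2.1 h.symm, ?_⟩
            have hnadj : ¬ T.Adj a u := fun h => hanti ⟨h, h0.2.2⟩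
            rcases T.range a u (fun h => h0.2.1 h.symm) with h | h | h
            · exact h
            · exact absurd (mono_a u ⟨fun hh => h0.2.1 hh.symm, h⟩) h0.2.2
            · exact absurd ⟨fun hh => h0.2.1 hh.symm, Or.inr h⟩ hnadj
          have hsbb : ∀ u ∈ S0, T.SAnti b u := by
            intro u hu
            have h0 := ((hmem0 u).mp hu)
            have := hsan (some b) pb (some u) h0.1
              (by simp only [ne_eq, Option.some.injEq]; exact fun h => h0.2.2 h.symm)
              (Or.inr (Or.inl rfl))
            refine ⟨fun h => h0.2.2 h.symm, ?_⟩
            rw [← hθss b u (fun h => hne.symm h.1) (fun h => h0.2.1 h.2)]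
            exact this.2
          have hstabb : T.StableF (insert b S0) :=
            stableF_insert hstab0 fun u hu => ⟨(hsbb u hu).1, Or.inl (hsbb u hu).2⟩
          have h3 : T.weightF wv we (insert b S0) = T.weightF wv we S0 + wv b :=
            weightF_insert_strong _ _ _ hb0 hsbb
          have hstabS : T.StableF (insert a (insert b S0)) := by
            refine stableF_insert hstabb fun u hu => ?_
            rcases Finset.mem_insert.mp hu with rfl | hu
            · exact ⟨hne, Or.inr hab.2⟩
            · exact ⟨(hsab u hu).1, Or.inl (hsab u hu).2⟩
          have hain : a ∉ insert b S0 := by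
            simp only [Finset.mem_insert]
            rintro (rfl | h)
            · exact hne rfl
            · exact ha0 h
          have h4 : T.weightF wv we (insert a (insert b S0)) + wv b
              = T.weightF wv we (insert b S0) + we a b := by
            refine weightF_insert_switch _ _ _ hw.1 hain (Finset.mem_insert_self b S0) hab
              ?_ ?_
            · intro u hu hub
              rcases Finset.mem_insert.mp hu with rfl | hu
              · exact absurd rfl hub
              · exact hsab u hu
            · intro u hu hub
              rcases Finset.mem_insert.mp hu with rfl | hu
              · exact absurd rfl hub
              · exact hsbb u hu
          have h5 := le_alphaW T wv we hstabS
          omega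
        · -- only b ∈ S'
          have heq : S' = insert (some b) (S0.map Embedding.some) := by
            ext x
            simp only [Finset.mem_insert]
            constructor
            · intro hx
              rcases hsplit x hx with h | h | h | h
              · exact absurd (h ▸ hx) pa
              · exact Or.inl h
              · exact absurd (h ▸ hx) pn
              · exact Or.inr h
            · rintro (rfl | h)
              · exact pb
              · exact hsub x h
          have h2 : (T.expandS a b).weightF (wvS wv we a b) (weO we) S'
              = T.weightF wv we S0 + wv b := by
            rw [heq, weightF_insert_strong _ _ _ (hnomap b hb0) ?_, htrans, hwvb]
            intro u hu
            exact hsan (some b) pb u (hsub u hu)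
              (by rcases Finset.mem_map.mp hu with ⟨v, hv, rfl⟩
                  exact fun h => hb0 ((Option.some_injective V h).symm ▸ hv)) (Or.inr (Or.inl rfl))
          have hsbb : ∀ u ∈ S0, T.SAnti b u := by
            intro u hu
            have h0 := ((hmem0 u).mp hu)
            have := hsan (some b) pb (some u) h0.1
              (by simp only [ne_eq, Option.some.injEq]; exact fun h => h0.2.2 h.symm)
              (Or.inr (Or.inl rfl))
            refine ⟨fun h => h0.2.2 h.symm, ?_⟩
            rw [← hθss b u (fun h => hne.symm h.1) (fun h => h0.2.1 h.2)]
            exact this.2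
          have hstabb : T.StableF (insert b S0) :=
            stableF_insert hstab0 fun u hu => ⟨(hsbb u hu).1, Or.inl (hsbb u hu).2⟩
          have h3 : T.weightF wv we (insert b S0) = T.weightF wv we S0 + wv b :=
            weightF_insert_strong _ _ _ hb0 hsbb
          have h5 := le_alphaW T wv we hstabb
          omega
      · by_cases pn : (none : Option V) ∈ S'
        · -- only a' ∈ S' : compare with S0 ∪ {a}
          have heq : S' = insert none (S0.map Embedding.some) := by
            ext x
            simp only [Finset.mem_insert]
            constructor
            · intro hx
              rcases hsplit x hx with h | h | h | h
              · exact absurd (h ▸ hx) pa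
              · exact absurd (h ▸ hx) pb
              · exact Or.inl h
              · exact Or.inr h
            · rintro (rfl | h)
              · exact pn
              · exact hsub x h
          have h2 : (T.expandS a b).weightF (wvS wv we a b) (weO we) S'
              = T.weightF wv we S0 + (we a b - wv b) := by
            rw [heq, weightF_insert_strong _ _ _ hnone
              (fun u hu => hsan none pn u (hsub u hu)
                (by rcases Finset.mem_map.mp hu with ⟨v, _, rfl⟩; simp)
                (Or.inr (Or.inr rfl))), htrans, hwvn]
          have hsab : ∀ u ∈ S0, T.SAnti a u := by
            intro u hu
            have h0 := ((hmem0 u).mp hu)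
            have hanti : ¬ (T.Adj a u ∧ u ≠ b) := by
              intro hc
              have hth : (T.expandS a b).θ none (some u) = 1 := by
                simp only [expandS]
                rw [if_pos hc]
              have h2 := hsan none pn (some u) h0.1 (by simp) (Or.inr (Or.inr rfl))
              have h3 := h2.2
              rw [hth] at h3
              norm_num at h3
            refine ⟨fun h => h0.2.1 h.symm, ?_⟩
            have hnadj : ¬ T.Adj a u := fun h => hanti ⟨h, h0.2.2⟩
            rcases T.range a u (fun h => h0.2.1 h.symm) with h | h | h
            · exact h
            · exact absurd (mono_a u ⟨fun hh => h0.2.1 hh.symm, h⟩) h0.2.2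
            · exact absurd ⟨fun hh => h0.2.1 hh.symm, Or.inr h⟩ hnadj
          have hstabS : T.StableF (insert a S0) :=
            stableF_insert hstab0 fun u hu => ⟨(hsab u hu).1, Or.inl (hsab u hu).2⟩
          have h3 : T.weightF wv we (insert a S0) = T.weightF wv we S0 + wv a :=
            weightF_insert_strong _ _ _ ha0 hsab
          have h5 := le_alphaW T wv we hstabS
          omega
        · -- none of a, b, a'
          have heq : S' = S0.map Embedding.some := by
            ext x
            constructor
            · intro hx
              rcases hsplit x hx with h | h | h | h
              · exact absurd (h ▸ hx) pa
              · exact absurd (h ▸ hx) pb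
              · exact absurd (h ▸ hx) pn
              · exact h
            · exact hsub x
          rw [heq, htrans]
          exact hW0
  · -- α(T) ≤ α((T.expandS a b))
    set S0 : Finset V := (S.erase a).erase b with hS0
    have hmem0 : ∀ v : V, v ∈ S0 ↔ v ∈ S ∧ v ≠ a ∧ v ≠ b := by
      intro v
      rw [hS0]
      simp only [Finset.mem_erase]
      tauto
    have ha0 : a ∉ S0 := fun h => ((hmem0 a).mp h).2.1 rfl
    have hb0 : b ∉ S0 := fun h => ((hmem0 b).mp h).2.2 rfl
    have hsplit : ∀ x ∈ S, x = a ∨ x = b ∨ x ∈ S0 := by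
      intro x hx
      by_cases hxa : x = a
      · exact Or.inl hxa
      by_cases hxb : x = b
      · exact Or.inr (Or.inl hxb)
      exact Or.inr (Or.inr ((hmem0 x).mpr ⟨hx, hxa, hxb⟩))
    have hstab0 : T.StableF S0 := fun u hu v hv huv =>
      hS u ((hmem0 u).mp hu).1 v ((hmem0 v).mp hv).1 huv
    have hsab : a ∈ S → ∀ u ∈ S0, T.SAnti a u := by
      intro haS u hu
      have h0 := (hmem0 u).mp hu
      exact sAnti_a u h0.2.1 h0.2.2 (hS a haS u h0.1 (fun h => h0.2.1 h.symm))
    have hsbb : b ∈ S → ∀ u ∈ S0, T.SAnti b u := by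
      intro hbS u hu
      have h0 := (hmem0 u).mp hu
      exact sAnti_b u h0.2.1 h0.2.2 (hS b hbS u h0.1 (fun h => h0.2.2 h.symm))
    have htrans : (T.expandS a b).weightF (wvS wv we a b) (weO we) (S0.map Embedding.some)
        = T.weightF wv we S0 := by
      refine weightF_map T (T.expandS a b) _ wv we _ _ S0 ?_ ?_ ?_
      · intro u hu v hv
        exact hθss u v (fun h => ((hmem0 u).mp hu).2.1 h.1)
          (fun h => ((hmem0 u).mp hu).2.2 h.1)
      · intro v hv
        exact hwvs v ((hmem0 v).mp hv).2.1
      · intro u _ v _; rfl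
    have hstabmap : (T.expandS a b).StableF (S0.map Embedding.some) := by
      refine stableF_map T (T.expandS a b) _ S0 ?_ hstab0
      intro u hu v hv
      exact hθss u v (fun h => ((hmem0 u).mp hu).2.1 h.1)
        (fun h => ((hmem0 u).mp hu).2.2 h.1)
    have hnomap : ∀ v : V, v ∉ S0 → some v ∉ S0.map Embedding.some := by
      intro v hv h
      rcases Finset.mem_map.mp h with ⟨u, hu, huv⟩
      rw [show u = v from Option.some_injective V huv] at hu
      exact hv hu
    have hnone : (none : Option V) ∉ S0.map Embedding.some := by
      intro h
      rcases Finset.mem_map.mp h with ⟨u, _, huv⟩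
      exact Option.some_ne_none u huv
    have hantinone : (∀ u ∈ S0, T.SAnti a u) →
        ∀ x ∈ S0.map Embedding.some, ((T.expandS a b).SAnti none x) := by
      intro hsa x hx
      rcases Finset.mem_map.mp hx with ⟨v, hv, rfl⟩
      exact ⟨by simp, hθnu' v (hsa v hv)⟩
    by_cases qa : a ∈ S
    · by_cases qb : b ∈ S
      · -- a, b ∈ S : S' = {b, a'} ∪ S0
        have heq : S = insert a (insert b S0) := by
          ext x
          simp only [Finset.mem_insert]
          constructor
          · intro hx
            exact hsplit x hx
          · rintro (rfl | rfl | h)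
            · exact qa
            · exact qb
            · exact ((hmem0 x).mp h).1
        have hain : a ∉ insert b S0 := by
          simp only [Finset.mem_insert]
          rintro (rfl | h)
          · exact hne rfl
          · exact ha0 h
        have h3 : T.weightF wv we (insert b S0) = T.weightF wv we S0 + wv b :=
          weightF_insert_strong _ _ _ hb0 (hsbb qb)
        have h4 : T.weightF wv we S + wv b
            = T.weightF wv we (insert b S0) + we a b := by
          rw [heq]
          refine weightF_insert_switch _ _ _ hw.1 hain (Finset.mem_insert_self b S0) hab ?_ ?_
          · intro u hu hub
            rcases Finset.mem_insert.mp hu with rfl | hu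
            · exact absurd rfl hub
            · exact hsab qa u hu
          · intro u hu hub
            rcases Finset.mem_insert.mp hu with rfl | hu
            · exact absurd rfl hub
            · exact hsbb qb u hu
        -- S' = insert (some b) (insert none map)
        have hstabn : (T.expandS a b).StableF (insert none (S0.map Embedding.some)) :=
          stableF_insert hstabmap fun u hu =>
            ⟨(hantinone (hsab qa) u hu).1, Or.inl (hantinone (hsab qa) u hu).2⟩
        have h1 : (T.expandS a b).weightF (wvS wv we a b) (weO we) (insert none (S0.map Embedding.some))
            = T.weightF wv we S0 + (we a b - wv b) := by
          rw [weightF_insert_strong _ _ _ hnone (hantinone (hsab qa)), htrans, hwvn]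
        have hbin : some b ∉ insert none (S0.map Embedding.some) := by
          simp only [Finset.mem_insert]
          rintro (h | h)
          · exact Option.some_ne_none b h
          · exact hnomap b hb0 h
        have hsanb : ∀ u ∈ insert none (S0.map Embedding.some), (T.expandS a b).SAnti (some b) u := by
          intro u hu
          rcases Finset.mem_insert.mp hu with rfl | hu
          · exact ⟨by simp, hθbn⟩
          · rcases Finset.mem_map.mp hu with ⟨v, hv, rfl⟩
            have h0 := (hmem0 v).mp hv
            refine ⟨fun h => h0.2.2 (Option.some_injective V h).symm, ?_⟩
            simp only [Embedding.some_apply]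
            rw [hθss b v (fun h => hne.symm h.1) (fun h => h0.2.1 h.2)]
            exact (hsbb qb v hv).2
        have hstabS' : (T.expandS a b).StableF (insert (some b) (insert none (S0.map Embedding.some))) :=
          stableF_insert hstabn fun u hu => ⟨(hsanb u hu).1, Or.inl (hsanb u hu).2⟩
        have h2 : (T.expandS a b).weightF (wvS wv we a b) (weO we)
            (insert (some b) (insert none (S0.map Embedding.some)))
            = T.weightF wv we S0 + (we a b - wv b) + wv b := by
          rw [weightF_insert_strong _ _ _ hbin hsanb, h1, hwvb]
        have h5 := le_alphaW (T.expandS a b) (wvS wv we a b) (weO we) hstabS'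
        omega
      · -- only a ∈ S : S' = {a, a'} ∪ S0
        have heq : S = insert a S0 := by
          ext x
          simp only [Finset.mem_insert]
          constructor
          · intro hx
            rcases hsplit x hx with h | h | h
            · exact Or.inl h
            · exact absurd (h ▸ hx) qb
            · exact Or.inr h
          · rintro (rfl | h)
            · exact qa
            · exact ((hmem0 x).mp h).1
        have h4 : T.weightF wv we S = T.weightF wv we S0 + wv a := by
          rw [heq]; exact weightF_insert_strong _ _ _ ha0 (hsab qa)
        have hstabn : (T.expandS a b).StableF (insert none (S0.map Embedding.some)) :=
          stableF_insert hstabmap fun u hu =>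
            ⟨(hantinone (hsab qa) u hu).1, Or.inl (hantinone (hsab qa) u hu).2⟩
        have h1 : (T.expandS a b).weightF (wvS wv we a b) (weO we) (insert none (S0.map Embedding.some))
            = T.weightF wv we S0 + (we a b - wv b) := by
          rw [weightF_insert_strong _ _ _ hnone (hantinone (hsab qa)), htrans, hwvn]
        have hain : some a ∉ insert none (S0.map Embedding.some) := by
          simp only [Finset.mem_insert]
          rintro (h | h)
          · exact Option.some_ne_none a h
          · exact hnomap a ha0 h
        have hsana : ∀ u ∈ insert none (S0.map Embedding.some), (T.expandS a b).SAnti (some a) u := by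
          intro u hu
          rcases Finset.mem_insert.mp hu with rfl | hu
          · exact ⟨by simp, hθan⟩
          · rcases Finset.mem_map.mp hu with ⟨v, hv, rfl⟩
            have h0 := (hmem0 v).mp hv
            refine ⟨fun h => h0.2.1 (Option.some_injective V h).symm, ?_⟩
            simp only [Embedding.some_apply]
            rw [hθss a v (fun h => h0.2.2 h.2) (fun h => hne h.1)]
            exact (hsab qa v hv).2
        have hstabS' : (T.expandS a b).StableF (insert (some a) (insert none (S0.map Embedding.some))) :=
          stableF_insert hstabn fun u hu => ⟨(hsana u hu).1, Or.inl (hsana u hu).2⟩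
        have h2 : (T.expandS a b).weightF (wvS wv we a b) (weO we)
            (insert (some a) (insert none (S0.map Embedding.some)))
            = T.weightF wv we S0 + (we a b - wv b) + (wv a + wv b - we a b) := by
          rw [weightF_insert_strong _ _ _ hain hsana, h1, hwva]
        have h5 := le_alphaW (T.expandS a b) (wvS wv we a b) (weO we) hstabS'
        omega
    · by_cases qb : b ∈ S
      · -- only b ∈ S : S' = {b} ∪ S0
        have heq : S = insert b S0 := by
          ext x
          simp only [Finset.mem_insert]
          constructor
          · intro hx
            rcases hsplit x hx with h | h | h
            · exact absurd (h ▸ hx) qa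
            · exact Or.inl h
            · exact Or.inr h
          · rintro (rfl | h)
            · exact qb
            · exact ((hmem0 x).mp h).1
        have h4 : T.weightF wv we S = T.weightF wv we S0 + wv b := by
          rw [heq]; exact weightF_insert_strong _ _ _ hb0 (hsbb qb)
        have hsanb : ∀ u ∈ S0.map Embedding.some, (T.expandS a b).SAnti (some b) u := by
          intro u hu
          rcases Finset.mem_map.mp hu with ⟨v, hv, rfl⟩
          have h0 := (hmem0 v).mp hv
          refine ⟨fun h => h0.2.2 (Option.some_injective V h).symm, ?_⟩
          simp only [Embedding.some_apply]
          rw [hθss b v (fun h => hne.symm h.1) (fun h => h0.2.1 h.2)]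
          exact (hsbb qb v hv).2
        have hstabS' : (T.expandS a b).StableF (insert (some b) (S0.map Embedding.some)) :=
          stableF_insert hstabmap fun u hu => ⟨(hsanb u hu).1, Or.inl (hsanb u hu).2⟩
        have h2 : (T.expandS a b).weightF (wvS wv we a b) (weO we)
            (insert (some b) (S0.map Embedding.some))
            = T.weightF wv we S0 + wv b := by
          rw [weightF_insert_strong _ _ _ (hnomap b hb0) hsanb, htrans, hwvb]
        have h5 := le_alphaW (T.expandS a b) (wvS wv we a b) (weO we) hstabS'
        omega
      · -- neither
        have heq : S = S0 := by
          ext x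
          constructor
          · intro hx
            rcases hsplit x hx with h | h | h
            · exact absurd (h ▸ hx) qa
            · exact absurd (h ▸ hx) qb
            · exact h
          · exact fun h => ((hmem0 x).mp h).1
        rw [heq, ← htrans]
        exact le_alphaW (T.expandS a b) (wvS wv we a b) (weO we) hstabmap

end Trigraph

namespace Trigraph

open Finset Function Classical in
lemma expandK_alpha {V : Type} [Fintype V] [DecidableEq V] (T : Trigraph V)
    (hmono : T.Monogamous) (wv : V → ℕ) (we : V → V → ℕ) (hw : T.GoodWeights wv we)
    (a b : V) (hab : T.Switch a b) :
    (T.expandK a b).alphaW (wvK wv we a b) (weO we) = T.alphaW wv we := by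
  have hne : a ≠ b := hab.1
  obtain ⟨hle1, hle2⟩ := hw.2 a b hab
  have hwa : wv a ≤ we a b := le_trans (le_max_left _ _) hle1
  have hwb : wv b ≤ we a b := le_trans (le_max_right _ _) hle1
  have mono_a : ∀ u, T.Switch a u → u = b := fun u h => hmono a u b h hab
  have mono_b : ∀ u, T.Switch b u → u = a := fun u h => hmono b u a h hab.symm2
  have sAnti_a : ∀ u, u ≠ a → u ≠ b → T.Anti a u → T.SAnti a u := fun u hua hub h =>
    h.sAnti_of_not_switch (fun hs => hub (mono_a u hs))
  have sAnti_b : ∀ u, u ≠ a → u ≠ b → T.Anti b u → T.SAnti b u := fun u hua hub h =>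
    h.sAnti_of_not_switch (fun hs => hua (mono_b u hs))
  -- θ facts for (T.expandK a b)
  have hθss : ∀ u v : V, ¬(u = a ∧ v = b) → ¬(u = b ∧ v = a) →
      (T.expandK a b).θ (some u) (some v) = T.θ u v := by
    intro u v h1 h2
    simp only [expandK]
    rw [if_neg (by tauto)]
  have hθab' : (T.expandK a b).θ (some a) (some b) = 1 := by
    simp only [expandK]
    rw [if_pos (by tauto)]
  have hθan : (T.expandK a b).θ (some a) none = 1 := by
    simp only [expandK]
    rw [if_pos (by tauto)]
  have hθbn : (T.expandK a b).θ (some b) none = -1 := by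
    simp only [expandK]
    rw [if_neg (by rintro (⟨_, h⟩ | h); exacts [h rfl, hne h.symm])]
  have hθnu : ∀ u : V, ¬ T.Adj a u ∨ u = b → u ≠ a → (T.expandK a b).θ none (some u) = -1 := by
    intro u hu hua
    simp only [expandK]
    rw [if_neg (by tauto)]
  have hθnu' : ∀ u : V, T.SAnti a u → (T.expandK a b).θ none (some u) = -1 := by
    intro u hu
    exact hθnu u (Or.inl (fun hadj => by
      rcases hadj.2 with h | h <;> rw [hu.2] at h <;> exact absurd h (by norm_num)))
      (fun h => hu.1 h.symm)
  -- no switchable pair of (T.expandK a b) touches some a, some b, none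
  have hnosw : ∀ x y : Option V, x ≠ y →
      (x = some a ∨ x = some b ∨ x = none) → (T.expandK a b).θ x y ≠ 0 := by
    rintro x y hxy (rfl | rfl | rfl)
    · match y with
      | none => rw [hθan]; norm_num
      | some v =>
        have hva : v ≠ a := fun h => hxy (by rw [h])
        by_cases hvb : v = b
        · rw [hvb, hθab']; norm_num
        · rw [hθss a v (fun h => hvb h.2) (fun h => hne h.1)]
          exact fun h0 => hvb (mono_a v ⟨fun h => hva h.symm, h0⟩)
    · match y with
      | none => rw [hθbn]; norm_num
      | some v =>
        have hvb : v ≠ b := fun h => hxy (by rw [h])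
        by_cases hva : v = a
        · rw [hva]
          simp only [expandK]
          rw [if_pos (by tauto)]; norm_num
        · rw [hθss b v (fun h => hne.symm h.1) (fun h => hva h.2)]
          exact fun h0 => hva (mono_b v ⟨fun h => hvb h.symm, h0⟩)
    · match y with
      | none => exact absurd rfl hxy
      | some v =>
        simp only [expandK]
        split <;> norm_num
  -- weights of the special vertices
  have hwva : wvK wv we a b (some a) = wv a := rfl
  have hwvb : wvK wv we a b (some b) = wv b := rfl
  have hwvn : wvK wv we a b none = we a b - wv b := rfl
  have hwvs : ∀ v : V, v ≠ a → wvK wv we a b (some v) = wv v := fun v _ => rfl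
  refine le_antisymm (alphaW_le _ _ _ fun S' hS' => ?_) (alphaW_le _ _ _ fun S hS => ?_)
  · -- α((T.expandK a b)) ≤ α(T)
    have hsan : ∀ x ∈ S', ∀ y ∈ S', x ≠ y → (x = some a ∨ x = some b ∨ x = none) →
        (T.expandK a b).SAnti x y := fun x hx y hy hxy hflag =>
      (hS' x hx y hy hxy).sAnti_of_not_switch (fun hs => hnosw x y hxy hflag hs.2)
    set S0 : Finset V := ((S'.erase (some a)).erase (some b)).filterMap id
      (by intro x y v hx hy
          rw [Option.mem_def] at hx hy
          rw [show x = some v from hx, show y = some v from hy]) with hS0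
    have hmem0 : ∀ v : V, v ∈ S0 ↔ some v ∈ S' ∧ v ≠ a ∧ v ≠ b := by
      intro v
      rw [hS0]
      simp only [Finset.mem_filterMap, Finset.mem_erase, Option.mem_def, id]
      constructor
      · rintro ⟨x, ⟨hxb, hxa, hxS⟩, rfl⟩
        exact ⟨hxS, fun h => hxa (by rw [h]), fun h => hxb (by rw [h])⟩
      · rintro ⟨h1, h2, h3⟩
        exact ⟨some v, ⟨by simpa using h3, by simpa using h2, h1⟩, rfl⟩
    have ha0 : a ∉ S0 := fun h => ((hmem0 a).mp h).2.1 rfl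
    have hb0 : b ∉ S0 := fun h => ((hmem0 b).mp h).2.2 rfl
    have hsub : ∀ x ∈ S0.map Embedding.some, x ∈ S' := by
      intro x hx
      rcases Finset.mem_map.mp hx with ⟨v, hv, rfl⟩
      exact ((hmem0 v).mp hv).1
    have hsplit : ∀ x ∈ S', x = some a ∨ x = some b ∨ x = none ∨
        x ∈ S0.map Embedding.some := by
      intro x hx
      match x with
      | none => exact Or.inr (Or.inr (Or.inl rfl))
      | some v =>
        by_cases hva : v = a
        · exact Or.inl (by rw [hva])
        by_cases hvb : v = b
        · exact Or.inr (Or.inl (by rw [hvb]))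
        exact Or.inr (Or.inr (Or.inr (Finset.mem_map_of_mem _
          ((hmem0 v).mpr ⟨hx, hva, hvb⟩))))
    have hnomap : ∀ v : V, v ∉ S0 → some v ∉ S0.map Embedding.some := by
      intro v hv h
      rcases Finset.mem_map.mp h with ⟨u, hu, huv⟩
      rw [show u = v from Option.some_injective V huv] at hu
      exact hv hu
    have hnone : (none : Option V) ∉ S0.map Embedding.some := by
      intro h
      rcases Finset.mem_map.mp h with ⟨u, _, huv⟩
      exact Option.some_ne_none u huv
    have hstab0 : T.StableF S0 := by
      intro u hu v hv huv
      have h1 := ((hmem0 u).mp hu)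
      have h2 := ((hmem0 v).mp hv)
      have := hS' (some u) h1.1 (some v) h2.1 (fun h => huv (Option.some_injective V h))
      exact ⟨huv, by
        rw [← hθss u v (fun h => h2.2.2 h.2) (fun h => h2.2.1 h.2)]
        exact this.2⟩
    have htrans : (T.expandK a b).weightF (wvK wv we a b) (weO we) (S0.map Embedding.some)
        = T.weightF wv we S0 := by
      refine weightF_map T (T.expandK a b) _ wv we _ _ S0 ?_ ?_ ?_
      · intro u hu v hv
        exact hθss u v (fun h => ((hmem0 u).mp hu).2.1 h.1)
          (fun h => ((hmem0 u).mp hu).2.2 h.1)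
      · intro v hv
        exact hwvs v ((hmem0 v).mp hv).2.1
      · intro u _ v _; rfl
    have hstabmap : T.StableF S0 := hstab0
    have hW0 := le_alphaW T wv we hstab0
    by_cases pa : some a ∈ S'
    · by_cases pb : some b ∈ S'
      · exfalso
        have := hS' (some a) pa (some b) pb (by simp [hne])
        rcases this.2 with h | h <;> rw [hθab'] at h <;> norm_num at h
      by_cases pn : (none : Option V) ∈ S'
      · exfalso
        have := hS' (some a) pa none pn (by simp)
        rcases this.2 with h | h <;> rw [hθan] at h <;> norm_num at h
      · -- only a ∈ S'
        have heq : S' = insert (some a) (S0.map Embedding.some) := by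
          ext x
          simp only [Finset.mem_insert]
          constructor
          · intro hx
            rcases hsplit x hx with h | h | h | h
            · exact Or.inl h
            · exact absurd (h ▸ hx) pb
            · exact absurd (h ▸ hx) pn
            · exact Or.inr h
          · rintro (rfl | h)
            · exact pa
            · exact hsub x h
        have hin2 : some a ∉ S0.map Embedding.some := hnomap a ha0
        have h2 : (T.expandK a b).weightF (wvK wv we a b) (weO we) S'
            = T.weightF wv we S0 + wv a := by
          rw [heq, weightF_insert_strong _ _ _ hin2 ?_, htrans, hwva]
          intro u hu
          exact hsan (some a) pa u (hsub u hu)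
            (by rcases Finset.mem_map.mp hu with ⟨v, hv, rfl⟩
                exact fun h => ha0 ((Option.some_injective V h).symm ▸ hv)) (Or.inl rfl)
        have hstabS : T.StableF (insert a S0) := by
          refine stableF_insert hstab0 fun u hu => ?_
          have := hsan (some a) pa (some u) ((hmem0 u).mp hu).1
            (by simp only [ne_eq, Option.some.injEq]; exact fun h => ha0 (h ▸ hu)) (Or.inl rfl)
          refine ⟨fun h => this.1 (congrArg some h), Or.inl ?_⟩
          rw [← hθss a u (fun h => ((hmem0 u).mp hu).2.2 h.2) (fun h => hne h.1)]
          exact this.2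
        have h3 : T.weightF wv we (insert a S0) = T.weightF wv we S0 + wv a := by
          refine weightF_insert_strong _ _ _ ha0 fun u hu => ?_
          exact sAnti_a u (fun h => ha0 (h ▸ hu)) (fun h => hb0 (h ▸ hu))
            (hstabS a (Finset.mem_insert_self a S0) u (Finset.mem_insert_of_mem hu)
              (fun h => ha0 (h ▸ hu)))
        have h4 := le_alphaW T wv we hstabS
        omega
    · by_cases pb : some b ∈ S'
      · by_cases pn : (none : Option V) ∈ S'
        · -- b, a' ∈ S' : compare with S0 ∪ {a, b}
          have heq : S' = insert (some b) (insert none (S0.map Embedding.some)) := by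
            ext x
            simp only [Finset.mem_insert]
            constructor
            · intro hx
              rcases hsplit x hx with h | h | h | h
              · exact absurd (h ▸ hx) pa
              · exact Or.inl h
              · exact Or.inr (Or.inl h)
              · exact Or.inr (Or.inr h)
            · rintro (rfl | rfl | h)
              · exact pb
              · exact pn
              · exact hsub x h
          have h1 : (T.expandK a b).weightF (wvK wv we a b) (weO we) (insert none (S0.map Embedding.some))
              = T.weightF wv we S0 + (we a b - wv b) := by
            rw [weightF_insert_strong _ _ _ hnone
              (fun u hu => hsan none pn u (hsub u hu)
                (by rcases Finset.mem_map.mp hu with ⟨v, _, rfl⟩; simp)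
                (Or.inr (Or.inr rfl))), htrans, hwvn]
          have hin2 : some b ∉ insert none (S0.map Embedding.some) := by
            simp only [Finset.mem_insert]
            rintro (h | h)
            · exact Option.some_ne_none b h
            · exact hnomap b hb0 h
          have h2 : (T.expandK a b).weightF (wvK wv we a b) (weO we) S'
              = T.weightF wv we S0 + (we a b - wv b) + wv b := by
            rw [heq, weightF_insert_strong _ _ _ hin2 ?_, h1, hwvb]
            intro u hu
            rcases Finset.mem_insert.mp hu with rfl | hu
            · exact hsan (some b) pb none pn (by simp) (Or.inr (Or.inl rfl))
            · exact hsan (some b) pb u (hsub u hu)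
                (by rcases Finset.mem_map.mp hu with ⟨v, hv, rfl⟩
                    exact fun h => hb0 ((Option.some_injective V h).symm ▸ hv)) (Or.inr (Or.inl rfl))
          -- S = insert a (insert b S0)
          have hsab : ∀ u ∈ S0, T.SAnti a u := by
            intro u hu
            have h0 := ((hmem0 u).mp hu)
            have hanti : ¬ (T.Adj a u ∧ u ≠ b) := by
              intro hc
              have hth : (T.expandK a b).θ none (some u) = 1 := by
                simp only [expandK]
                rw [if_pos (Or.inl hc)]
              have h2 := hsan none pn (some u) h0.1 (by simp) (Or.inr (Or.inr rfl))
              have h3 := h2.2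
              rw [hth] at h3
              norm_num at h3
            refine ⟨fun h => h0.2.1 h.symm, ?_⟩
            have hnadj : ¬ T.Adj a u := fun h => hanti ⟨h, h0.2.2⟩
            rcases T.range a u (fun h => h0.2.1 h.symm) with h | h | h
            · exact h
            · exact absurd (mono_a u ⟨fun hh => h0.2.1 hh.symm, h⟩) h0.2.2
            · exact absurd ⟨fun hh => h0.2.1 hh.symm, Or.inr h⟩ hnadj
          have hsbb : ∀ u ∈ S0, T.SAnti b u := by
            intro u hu
            have h0 := ((hmem0 u).mp hu)
            have := hsan (some b) pb (some u) h0.1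
              (by simp only [ne_eq, Option.some.injEq]; exact fun h => h0.2.2 h.symm)
              (Or.inr (Or.inl rfl))
            refine ⟨fun h => h0.2.2 h.symm, ?_⟩
            rw [← hθss b u (fun h => hne.symm h.1) (fun h => h0.2.1 h.2)]
            exact this.2
          have hstabb : T.StableF (insert b S0) :=
            stableF_insert hstab0 fun u hu => ⟨(hsbb u hu).1, Or.inl (hsbb u hu).2⟩
          have h3 : T.weightF wv we (insert b S0) = T.weightF wv we S0 + wv b :=
            weightF_insert_strong _ _ _ hb0 hsbb
          have hstabS : T.StableF (insert a (insert b S0)) := by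
            refine stableF_insert hstabb fun u hu => ?_
            rcases Finset.mem_insert.mp hu with rfl | hu
            · exact ⟨hne, Or.inr hab.2⟩
            · exact ⟨(hsab u hu).1, Or.inl (hsab u hu).2⟩
          have hain : a ∉ insert b S0 := by
            simp only [Finset.mem_insert]
            rintro (rfl | h)
            · exact hne rfl
            · exact ha0 h
          have h4 : T.weightF wv we (insert a (insert b S0)) + wv b
              = T.weightF wv we (insert b S0) + we a b := by
            refine weightF_insert_switch _ _ _ hw.1 hain (Finset.mem_insert_self b S0) hab
              ?_ ?_
            · intro u hu hub
              rcases Finset.mem_insert.mp hu with rfl | hu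
              · exact absurd rfl hub
              · exact hsab u hu
            · intro u hu hub
              rcases Finset.mem_insert.mp hu with rfl | hu
              · exact absurd rfl hub
              · exact hsbb u hu
          have h5 := le_alphaW T wv we hstabS
          omega
        · -- only b ∈ S'
          have heq : S' = insert (some b) (S0.map Embedding.some) := by
            ext x
            simp only [Finset.mem_insert]
            constructor
            · intro hx
              rcases hsplit x hx with h | h | h | h
              · exact absurd (h ▸ hx) pa
              · exact Or.inl h
              · exact absurd (h ▸ hx) pn
              · exact Or.inr h
            · rintro (rfl | h)
              · exact pb
              · exact hsub x h
          have h2 : (T.expandK a b).weightF (wvK wv we a b) (weO we) S'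
              = T.weightF wv we S0 + wv b := by
            rw [heq, weightF_insert_strong _ _ _ (hnomap b hb0) ?_, htrans, hwvb]
            intro u hu
            exact hsan (some b) pb u (hsub u hu)
              (by rcases Finset.mem_map.mp hu with ⟨v, hv, rfl⟩
                  exact fun h => hb0 ((Option.some_injective V h).symm ▸ hv)) (Or.inr (Or.inl rfl))
          have hsbb : ∀ u ∈ S0, T.SAnti b u := by
            intro u hu
            have h0 := ((hmem0 u).mp hu)
            have := hsan (some b) pb (some u) h0.1
              (by simp only [ne_eq, Option.some.injEq]; exact fun h => h0.2.2 h.symm)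
              (Or.inr (Or.inl rfl))
            refine ⟨fun h => h0.2.2 h.symm, ?_⟩
            rw [← hθss b u (fun h => hne.symm h.1) (fun h => h0.2.1 h.2)]
            exact this.2
          have hstabb : T.StableF (insert b S0) :=
            stableF_insert hstab0 fun u hu => ⟨(hsbb u hu).1, Or.inl (hsbb u hu).2⟩
          have h3 : T.weightF wv we (insert b S0) = T.weightF wv we S0 + wv b :=
            weightF_insert_strong _ _ _ hb0 hsbb
          have h5 := le_alphaW T wv we hstabb
          omega
      · by_cases pn : (none : Option V) ∈ S'
        · -- only a' ∈ S' : compare with S0 ∪ {a}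
          have heq : S' = insert none (S0.map Embedding.some) := by
            ext x
            simp only [Finset.mem_insert]
            constructor
            · intro hx
              rcases hsplit x hx with h | h | h | h
              · exact absurd (h ▸ hx) pa
              · exact absurd (h ▸ hx) pb
              · exact Or.inl h
              · exact Or.inr h
            · rintro (rfl | h)
              · exact pn
              · exact hsub x h
          have h2 : (T.expandK a b).weightF (wvK wv we a b) (weO we) S'
              = T.weightF wv we S0 + (we a b - wv b) := by
            rw [heq, weightF_insert_strong _ _ _ hnone
              (fun u hu => hsan none pn u (hsub u hu)
                (by rcases Finset.mem_map.mp hu with ⟨v, _, rfl⟩; simp)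
                (Or.inr (Or.inr rfl))), htrans, hwvn]
          have hsab : ∀ u ∈ S0, T.SAnti a u := by
            intro u hu
            have h0 := ((hmem0 u).mp hu)
            have hanti : ¬ (T.Adj a u ∧ u ≠ b) := by
              intro hc
              have hth : (T.expandK a b).θ none (some u) = 1 := by
                simp only [expandK]
                rw [if_pos (Or.inl hc)]
              have h2 := hsan none pn (some u) h0.1 (by simp) (Or.inr (Or.inr rfl))
              have h3 := h2.2
              rw [hth] at h3
              norm_num at h3
            refine ⟨fun h => h0.2.1 h.symm, ?_⟩
            have hnadj : ¬ T.Adj a u := fun h => hanti ⟨h, h0.2.2⟩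
            rcases T.range a u (fun h => h0.2.1 h.symm) with h | h | h
            · exact h
            · exact absurd (mono_a u ⟨fun hh => h0.2.1 hh.symm, h⟩) h0.2.2
            · exact absurd ⟨fun hh => h0.2.1 hh.symm, Or.inr h⟩ hnadj
          have hstabS : T.StableF (insert a S0) :=
            stableF_insert hstab0 fun u hu => ⟨(hsab u hu).1, Or.inl (hsab u hu).2⟩
          have h3 : T.weightF wv we (insert a S0) = T.weightF wv we S0 + wv a :=
            weightF_insert_strong _ _ _ ha0 hsab
          have h5 := le_alphaW T wv we hstabS
          omega
        · -- none of a, b, a'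
          have heq : S' = S0.map Embedding.some := by
            ext x
            constructor
            · intro hx
              rcases hsplit x hx with h | h | h | h
              · exact absurd (h ▸ hx) pa
              · exact absurd (h ▸ hx) pb
              · exact absurd (h ▸ hx) pn
              · exact h
            · exact hsub x
          rw [heq, htrans]
          exact hW0
  · -- α(T) ≤ α((T.expandK a b))
    set S0 : Finset V := (S.erase a).erase b with hS0
    have hmem0 : ∀ v : V, v ∈ S0 ↔ v ∈ S ∧ v ≠ a ∧ v ≠ b := by
      intro v
      rw [hS0]
      simp only [Finset.mem_erase]
      tauto
    have ha0 : a ∉ S0 := fun h => ((hmem0 a).mp h).2.1 rfl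
    have hb0 : b ∉ S0 := fun h => ((hmem0 b).mp h).2.2 rfl
    have hsplit : ∀ x ∈ S, x = a ∨ x = b ∨ x ∈ S0 := by
      intro x hx
      by_cases hxa : x = a
      · exact Or.inl hxa
      by_cases hxb : x = b
      · exact Or.inr (Or.inl hxb)
      exact Or.inr (Or.inr ((hmem0 x).mpr ⟨hx, hxa, hxb⟩))
    have hstab0 : T.StableF S0 := fun u hu v hv huv =>
      hS u ((hmem0 u).mp hu).1 v ((hmem0 v).mp hv).1 huv
    have hsab : a ∈ S → ∀ u ∈ S0, T.SAnti a u := by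
      intro haS u hu
      have h0 := (hmem0 u).mp hu
      exact sAnti_a u h0.2.1 h0.2.2 (hS a haS u h0.1 (fun h => h0.2.1 h.symm))
    have hsbb : b ∈ S → ∀ u ∈ S0, T.SAnti b u := by
      intro hbS u hu
      have h0 := (hmem0 u).mp hu
      exact sAnti_b u h0.2.1 h0.2.2 (hS b hbS u h0.1 (fun h => h0.2.2 h.symm))
    have htrans : (T.expandK a b).weightF (wvK wv we a b) (weO we) (S0.map Embedding.some)
        = T.weightF wv we S0 := by
      refine weightF_map T (T.expandK a b) _ wv we _ _ S0 ?_ ?_ ?_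
      · intro u hu v hv
        exact hθss u v (fun h => ((hmem0 u).mp hu).2.1 h.1)
          (fun h => ((hmem0 u).mp hu).2.2 h.1)
      · intro v hv
        exact hwvs v ((hmem0 v).mp hv).2.1
      · intro u _ v _; rfl
    have hstabmap : (T.expandK a b).StableF (S0.map Embedding.some) := by
      refine stableF_map T (T.expandK a b) _ S0 ?_ hstab0
      intro u hu v hv
      exact hθss u v (fun h => ((hmem0 u).mp hu).2.1 h.1)
        (fun h => ((hmem0 u).mp hu).2.2 h.1)
    have hnomap : ∀ v : V, v ∉ S0 → some v ∉ S0.map Embedding.some := by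
      intro v hv h
      rcases Finset.mem_map.mp h with ⟨u, hu, huv⟩
      rw [show u = v from Option.some_injective V huv] at hu
      exact hv hu
    have hnone : (none : Option V) ∉ S0.map Embedding.some := by
      intro h
      rcases Finset.mem_map.mp h with ⟨u, _, huv⟩
      exact Option.some_ne_none u huv
    have hantinone : (∀ u ∈ S0, T.SAnti a u) →
        ∀ x ∈ S0.map Embedding.some, ((T.expandK a b).SAnti none x) := by
      intro hsa x hx
      rcases Finset.mem_map.mp hx with ⟨v, hv, rfl⟩
      exact ⟨by simp, hθnu' v (hsa v hv)⟩
    by_cases qa : a ∈ S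
    · by_cases qb : b ∈ S
      · -- a, b ∈ S : S' = {b, a'} ∪ S0
        have heq : S = insert a (insert b S0) := by
          ext x
          simp only [Finset.mem_insert]
          constructor
          · intro hx
            exact hsplit x hx
          · rintro (rfl | rfl | h)
            · exact qa
            · exact qb
            · exact ((hmem0 x).mp h).1
        have hain : a ∉ insert b S0 := by
          simp only [Finset.mem_insert]
          rintro (rfl | h)
          · exact hne rfl
          · exact ha0 h
        have h3 : T.weightF wv we (insert b S0) = T.weightF wv we S0 + wv b :=
          weightF_insert_strong _ _ _ hb0 (hsbb qb)
        have h4 : T.weightF wv we S + wv b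
            = T.weightF wv we (insert b S0) + we a b := by
          rw [heq]
          refine weightF_insert_switch _ _ _ hw.1 hain (Finset.mem_insert_self b S0) hab ?_ ?_
          · intro u hu hub
            rcases Finset.mem_insert.mp hu with rfl | hu
            · exact absurd rfl hub
            · exact hsab qa u hu
          · intro u hu hub
            rcases Finset.mem_insert.mp hu with rfl | hu
            · exact absurd rfl hub
            · exact hsbb qb u hu
        -- S' = insert (some b) (insert none map)
        have hstabn : (T.expandK a b).StableF (insert none (S0.map Embedding.some)) :=
          stableF_insert hstabmap fun u hu =>
            ⟨(hantinone (hsab qa) u hu).1, Or.inl (hantinone (hsab qa) u hu).2⟩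
        have h1 : (T.expandK a b).weightF (wvK wv we a b) (weO we) (insert none (S0.map Embedding.some))
            = T.weightF wv we S0 + (we a b - wv b) := by
          rw [weightF_insert_strong _ _ _ hnone (hantinone (hsab qa)), htrans, hwvn]
        have hbin : some b ∉ insert none (S0.map Embedding.some) := by
          simp only [Finset.mem_insert]
          rintro (h | h)
          · exact Option.some_ne_none b h
          · exact hnomap b hb0 h
        have hsanb : ∀ u ∈ insert none (S0.map Embedding.some), (T.expandK a b).SAnti (some b) u := by
          intro u hu
          rcases Finset.mem_insert.mp hu with rfl | hu
          · exact ⟨by simp, hθbn⟩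
          · rcases Finset.mem_map.mp hu with ⟨v, hv, rfl⟩
            have h0 := (hmem0 v).mp hv
            refine ⟨fun h => h0.2.2 (Option.some_injective V h).symm, ?_⟩
            simp only [Embedding.some_apply]
            rw [hθss b v (fun h => hne.symm h.1) (fun h => h0.2.1 h.2)]
            exact (hsbb qb v hv).2
        have hstabS' : (T.expandK a b).StableF (insert (some b) (insert none (S0.map Embedding.some))) :=
          stableF_insert hstabn fun u hu => ⟨(hsanb u hu).1, Or.inl (hsanb u hu).2⟩
        have h2 : (T.expandK a b).weightF (wvK wv we a b) (weO we)
            (insert (some b) (insert none (S0.map Embedding.some)))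
            = T.weightF wv we S0 + (we a b - wv b) + wv b := by
          rw [weightF_insert_strong _ _ _ hbin hsanb, h1, hwvb]
        have h5 := le_alphaW (T.expandK a b) (wvK wv we a b) (weO we) hstabS'
        omega
      · -- only a ∈ S : S' = {a, a'} ∪ S0
        have heq : S = insert a S0 := by
          ext x
          simp only [Finset.mem_insert]
          constructor
          · intro hx
            rcases hsplit x hx with h | h | h
            · exact Or.inl h
            · exact absurd (h ▸ hx) qb
            · exact Or.inr h
          · rintro (rfl | h)
            · exact qa
            · exact ((hmem0 x).mp h).1
        have h4 : T.weightF wv we S = T.weightF wv we S0 + wv a := by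
          rw [heq]; exact weightF_insert_strong _ _ _ ha0 (hsab qa)
        have hsana : ∀ u ∈ S0.map Embedding.some, (T.expandK a b).SAnti (some a) u := by
          intro u hu
          rcases Finset.mem_map.mp hu with ⟨v, hv, rfl⟩
          have h0 := (hmem0 v).mp hv
          refine ⟨fun h => h0.2.1 (Option.some_injective V h).symm, ?_⟩
          simp only [Embedding.some_apply]
          rw [hθss a v (fun h => h0.2.2 h.2) (fun h => hne h.1)]
          exact (hsab qa v hv).2
        have hstabS' : (T.expandK a b).StableF (insert (some a) (S0.map Embedding.some)) :=
          stableF_insert hstabmap fun u hu => ⟨(hsana u hu).1, Or.inl (hsana u hu).2⟩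
        have h2 : (T.expandK a b).weightF (wvK wv we a b) (weO we)
            (insert (some a) (S0.map Embedding.some))
            = T.weightF wv we S0 + wv a := by
          rw [weightF_insert_strong _ _ _ (hnomap a ha0) hsana, htrans, hwva]
        have h5 := le_alphaW (T.expandK a b) (wvK wv we a b) (weO we) hstabS'
        omega
    · by_cases qb : b ∈ S
      · -- only b ∈ S : S' = {b} ∪ S0
        have heq : S = insert b S0 := by
          ext x
          simp only [Finset.mem_insert]
          constructor
          · intro hx
            rcases hsplit x hx with h | h | h
            · exact absurd (h ▸ hx) qa
            · exact Or.inl h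
            · exact Or.inr h
          · rintro (rfl | h)
            · exact qb
            · exact ((hmem0 x).mp h).1
        have h4 : T.weightF wv we S = T.weightF wv we S0 + wv b := by
          rw [heq]; exact weightF_insert_strong _ _ _ hb0 (hsbb qb)
        have hsanb : ∀ u ∈ S0.map Embedding.some, (T.expandK a b).SAnti (some b) u := by
          intro u hu
          rcases Finset.mem_map.mp hu with ⟨v, hv, rfl⟩
          have h0 := (hmem0 v).mp hv
          refine ⟨fun h => h0.2.2 (Option.some_injective V h).symm, ?_⟩
          simp only [Embedding.some_apply]
          rw [hθss b v (fun h => hne.symm h.1) (fun h => h0.2.1 h.2)]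
          exact (hsbb qb v hv).2
        have hstabS' : (T.expandK a b).StableF (insert (some b) (S0.map Embedding.some)) :=
          stableF_insert hstabmap fun u hu => ⟨(hsanb u hu).1, Or.inl (hsanb u hu).2⟩
        have h2 : (T.expandK a b).weightF (wvK wv we a b) (weO we)
            (insert (some b) (S0.map Embedding.some))
            = T.weightF wv we S0 + wv b := by
          rw [weightF_insert_strong _ _ _ (hnomap b hb0) hsanb, htrans, hwvb]
        have h5 := le_alphaW (T.expandK a b) (wvK wv we a b) (weO we) hstabS'
        omega
      · -- neither
        have heq : S = S0 := by
          ext x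
          constructor
          · intro hx
            rcases hsplit x hx with h | h | h
            · exact absurd (h ▸ hx) qa
            · exact absurd (h ▸ hx) qb
            · exact h
          · exact fun h => ((hmem0 x).mp h).1
        rw [heq, ← htrans]
        exact le_alphaW (T.expandK a b) (wvK wv we a b) (weO we) hstabmap

end Trigraph

/-- For a weighted monogamous trigraph `T` with a switchable pair `ab`,
`α(T_{a→S}) = α(T_{b→S}) = α(T_{a→K}) = α(T_{b→K}) = α(T)`, where the expanded trigraphs
carry the weights described in the paper. -/
theorem expand_alpha {V : Type} [Fintype V] [DecidableEq V] (T : Trigraph V)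
    (hmono : T.Monogamous) (wv : V → ℕ) (we : V → V → ℕ) (hw : T.GoodWeights wv we)
    (a b : V) (hab : T.Switch a b) :
    (T.expandS a b).alphaW (Trigraph.wvS wv we a b) (Trigraph.weO we) = T.alphaW wv we ∧
    (T.expandS b a).alphaW (Trigraph.wvS wv we b a) (Trigraph.weO we) = T.alphaW wv we ∧
    (T.expandK a b).alphaW (Trigraph.wvK wv we a b) (Trigraph.weO we) = T.alphaW wv we ∧
    (T.expandK b a).alphaW (Trigraph.wvK wv we b a) (Trigraph.weO we) = T.alphaW wv we :=
  ⟨Trigraph.expandS_alpha T hmono wv we hw a b hab,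
   Trigraph.expandS_alpha T hmono wv we hw b a hab.symm2,
   Trigraph.expandK_alpha T hmono wv we hw a b hab,
   Trigraph.expandK_alpha T hmono wv we hw b a hab.symm2⟩
end

section
/- Let G be a finite bull-free graph, let X ⊆ V(G) be such that the induced subgraph G[X] is triangle-free, and let K be a clique of G disjoint from X. Then the family {N(v)∩X : v ∈ K} of subsets of X shatters no 3-element subset of X (i.e., it has Vapnik–Chervonenkis dimension at most 2), and consequently the number of distinct sets of the form N(v)∩X with v ∈ K is at most C(|X|,2) + |X| + 1, where C(n,2) denotes the binomial coefficient. -/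
/-- The bull graph: a triangle `x₁ = 0`, `x₂ = 1`, `x₃ = 2` together with two horns
`y = 3` (adjacent to `x₁`) and `z = 4` (adjacent to `x₂`). -/
def bullGraph : SimpleGraph (Fin 5) :=
  SimpleGraph.fromEdgeSet {s(0, 1), s(0, 2), s(1, 2), s(0, 3), s(1, 4)}

/-- A graph is bull-free if it has no induced subgraph isomorphic to the bull. -/
def BullFree {V : Type*} (G : SimpleGraph V) : Prop :=
  ∀ f : Fin 5 → V, ¬ (Function.Injective f ∧ ∀ u v, bullGraph.Adj u v ↔ G.Adj (f u) (f v))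

/-- The chromatic number of `G` (as a natural number). -/
noncomputable def chromNum {V : Type*} (G : SimpleGraph V) : ℕ :=
  sInf {n | G.Colorable n}

/-- The clique number of `G`. -/
noncomputable def cliqueNum {V : Type*} (G : SimpleGraph V) : ℕ :=
  sSup {n | ∃ s : Finset V, G.IsNClique n s}

/-- The independence number of `G`. -/
noncomputable def indepNum {V : Type*} (G : SimpleGraph V) : ℕ :=
  sSup {n | ∃ s : Finset V, Gᶜ.IsNClique n s}

/-- The triangle-free chromatic number of `G`: the maximum chromatic number of a
triangle-free induced subgraph of `G`. -/
noncomputable def chiT {V : Type*} (G : SimpleGraph V) : ℕ :=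
  sSup {m | ∃ S : Set V, (G.induce S).CliqueFree 3 ∧ m = chromNum (G.induce S)}

/-- `G` contains an odd hole: an induced cycle of odd length at least 5. -/
def HasOddHole {V : Type*} (G : SimpleGraph V) : Prop :=
  ∃ k : ℕ, 5 ≤ k ∧ Odd k ∧ ∃ f : Fin k → V, Function.Injective f ∧
    ∀ i j : Fin k, G.Adj (f i) (f j) ↔ ((i.val + 1) % k = j.val ∨ (j.val + 1) % k = i.val)

/-- A semicoloring of `G`: no inclusion-maximal clique with at least two vertices is
monochromatic. -/
def IsSemicoloring {V : Type*} (G : SimpleGraph V) {N : ℕ} (c : V → Fin N) : Prop :=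
  ∀ K : Finset V, G.IsClique ↑K →
    (∀ K' : Finset V, G.IsClique ↑K' → K ⊆ K' → K = K') →
    2 ≤ K.card → ∃ u ∈ K, ∃ v ∈ K, c u ≠ c v

/-- The Ramsey number `R(s, t)`: the least `n` such that every graph on `n` vertices has a
clique of size `s` or an independent set of size `t`. -/
noncomputable def ramsey (s t : ℕ) : ℕ :=
  sInf {n | ∀ G : SimpleGraph (Fin n),
    (∃ K : Finset (Fin n), G.IsNClique s K) ∨ (∃ I : Finset (Fin n), Gᶜ.IsNClique t I)}

lemma bull_of_config {V : Type} (G : SimpleGraph V) (u w s a b : V)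
    (huw : G.Adj u w) (hus : G.Adj u s) (hws : G.Adj w s)
    (hua : G.Adj u a) (hwb : G.Adj w b)
    (hub : ¬ G.Adj u b) (hwa : ¬ G.Adj w a) (hsa : ¬ G.Adj s a) (hsb : ¬ G.Adj s b)
    (hab : ¬ G.Adj a b)
    (hau : a ≠ u) (haw : a ≠ w) (has : a ≠ s) (hbu : b ≠ u) (hbw : b ≠ w) (hbs : b ≠ s)
    (hab' : a ≠ b) (hbf : BullFree G) : False := by
  apply hbf ![u, w, s, a, b]
  have h1 : u ≠ w := huw.ne
  have h2 : u ≠ s := hus.ne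
  have h3 : w ≠ s := hws.ne
  constructor
  · intro i j hij
    fin_cases i <;> fin_cases j <;> simp_all
  · intro i j
    fin_cases i <;> fin_cases j <;>
      simp [bullGraph, SimpleGraph.fromEdgeSet_adj, Set.mem_insert_iff, Set.mem_singleton_iff,
        Sym2.eq, Sym2.rel_iff', Prod.mk.injEq, G.irrefl] <;>
      first
        | exact huw | exact huw.symm | exact hus | exact hus.symm | exact hws | exact hws.symm
        | exact hua | exact hua.symm | exact hwb | exact hwb.symm
        | exact hub | exact fun h => hub h.symm
        | exact hwa | exact fun h => hwa h.symm
        | exact hsa | exact fun h => hsa h.symm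
        | exact hsb | exact fun h => hsb h.symm
        | exact hab | exact fun h => hab h.symm

/-- Core lemma: a nonadjacent pair in a shattered set yields a bull. -/
lemma no_shatter_pair {V : Type} (G : SimpleGraph V) (hbf : BullFree G) (X : Set V)
    (K : Set V) (hK : G.IsClique K) (hdisj : Disjoint K X)
    (S : Set V) (hSX : S ⊆ X) (a b : V) (haS : a ∈ S) (hbS : b ∈ S) (hab : a ≠ b)
    (hnadj : ¬ G.Adj a b)
    (hshat : ∀ Y : Set V, Y ⊆ S → ∃ v ∈ K, (G.neighborSet v ∩ X) ∩ S = Y) : False := by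
  obtain ⟨u, huK, hu⟩ := hshat {a} (Set.singleton_subset_iff.mpr haS)
  obtain ⟨w, hwK, hw⟩ := hshat {b} (Set.singleton_subset_iff.mpr hbS)
  obtain ⟨s, hsK, hs⟩ := hshat ∅ (Set.empty_subset S)
  have haX : a ∈ X := hSX haS
  have hbX : b ∈ X := hSX hbS
  -- membership facts
  have hua : G.Adj u a := by
    have : a ∈ (G.neighborSet u ∩ X) ∩ S := hu ▸ rfl
    exact this.1.1
  have hwb : G.Adj w b := by
    have : b ∈ (G.neighborSet w ∩ X) ∩ S := hw ▸ rfl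
    exact this.1.1
  have hub : ¬ G.Adj u b := fun h => by
    have : b ∈ (G.neighborSet u ∩ X) ∩ S := ⟨⟨h, hbX⟩, hbS⟩
    rw [hu] at this; exact hab (this.symm)
  have hwa : ¬ G.Adj w a := fun h => by
    have : a ∈ (G.neighborSet w ∩ X) ∩ S := ⟨⟨h, haX⟩, haS⟩
    rw [hw] at this; exact hab this
  have hsa : ¬ G.Adj s a := fun h => by
    have : a ∈ (G.neighborSet s ∩ X) ∩ S := ⟨⟨h, haX⟩, haS⟩
    rw [hs] at this; exact this
  have hsb : ¬ G.Adj s b := fun h => by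
    have : b ∈ (G.neighborSet s ∩ X) ∩ S := ⟨⟨h, hbX⟩, hbS⟩
    rw [hs] at this; exact this
  have huw : u ≠ w := fun h => hwa (h ▸ hua)
  have hus : u ≠ s := fun h => hsa (h ▸ hua)
  have hws : w ≠ s := fun h => hsb (h ▸ hwb)
  have hau : a ≠ u := fun h => (hdisj.ne_of_mem huK haX) h.symm
  have haw : a ≠ w := fun h => (hdisj.ne_of_mem hwK haX) h.symm
  have has : a ≠ s := fun h => (hdisj.ne_of_mem hsK haX) h.symm
  have hbu : b ≠ u := fun h => (hdisj.ne_of_mem huK hbX) h.symm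
  have hbw : b ≠ w := fun h => (hdisj.ne_of_mem hwK hbX) h.symm
  have hbs : b ≠ s := fun h => (hdisj.ne_of_mem hsK hbX) h.symm
  exact bull_of_config G u w s a b (hK huK hwK huw) (hK huK hsK hus) (hK hwK hsK hws)
    hua hwb hub hwa hsa hsb hnadj hau haw has hbu hbw hbs hab hbf

open Finset in
/-- In a finite bull-free graph `G`, if `X` induces a triangle-free subgraph and `K` is a
clique disjoint from `X`, then the family of traces `N(v) ∩ X` (for `v ∈ K`) shatters no
3-element subset of `X` (VC dimension at most 2), and hence the number of distinct such
traces is at most `C(|X|, 2) + |X| + 1`. -/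
theorem bullfree_trace_vc {V : Type} [Fintype V] [DecidableEq V] (G : SimpleGraph V)
    (hbf : BullFree G) (X : Set V) (hX : (G.induce X).CliqueFree 3)
    (K : Set V) (hK : G.IsClique K) (hdisj : Disjoint K X) :
    (∀ S : Set V, S ⊆ X → S.ncard = 3 →
      ¬ (∀ Y : Set V, Y ⊆ S → ∃ v ∈ K, (G.neighborSet v ∩ X) ∩ S = Y)) ∧
    {A : Set V | ∃ v ∈ K, A = G.neighborSet v ∩ X}.ncard ≤
      X.ncard.choose 2 + X.ncard + 1 := by
  classical
  have part1 : ∀ S : Set V, S ⊆ X → S.ncard = 3 →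
      ¬ (∀ Y : Set V, Y ⊆ S → ∃ v ∈ K, (G.neighborSet v ∩ X) ∩ S = Y) := by
    intro S hSX hS3 hshat
    obtain ⟨a, b, c, hab, hac, hbc, rfl⟩ := Set.ncard_eq_three.mp hS3
    have haS : a ∈ ({a, b, c} : Set V) := by simp
    have hbS : b ∈ ({a, b, c} : Set V) := by simp
    have hcS : c ∈ ({a, b, c} : Set V) := by simp
    have haX := hSX haS; have hbX := hSX hbS; have hcX := hSX hcS
    -- some pair is nonadjacent since X induces a triangle-free graph
    by_cases h1 : G.Adj a b
    · by_cases h2 : G.Adj a c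
      · by_cases h3 : G.Adj b c
        · exact hX {⟨a, haX⟩, ⟨b, hbX⟩, ⟨c, hcX⟩} (by
            rw [SimpleGraph.is3Clique_triple_iff]
            refine ⟨?_, ?_, ?_⟩ <;> simp [h1, h2, h3])
        · exact no_shatter_pair G hbf X K hK hdisj _ hSX b c hbS hcS hbc h3 hshat
      · exact no_shatter_pair G hbf X K hK hdisj _ hSX a c haS hcS hac h2 hshat
    · exact no_shatter_pair G hbf X K hK hdisj _ hSX a b haS hbS hab h1 hshat
  refine ⟨part1, ?_⟩
  -- Part 2: Sauer–Shelah
  set Xf : Finset V := X.toFinset with hXf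
  set tr : V → Finset V := fun v => Xf.filter (fun x => G.Adj v x) with htr
  have htrcoe : ∀ v : V, (↑(tr v) : Set V) = G.neighborSet v ∩ X := by
    intro v
    ext x
    simp [htr, hXf, SimpleGraph.mem_neighborSet, And.comm]
  set Fam : Finset (Finset V) := K.toFinset.image tr with hFam
  -- the trace set is the coe-image of Fam
  have hset : {A : Set V | ∃ v ∈ K, A = G.neighborSet v ∩ X} =
      (fun t : Finset V => (↑t : Set V)) '' ↑Fam := by
    ext A
    simp only [Set.mem_setOf_eq, Set.mem_image, hFam, coe_image, Set.mem_image, mem_coe,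
      Set.mem_toFinset]
    constructor
    · rintro ⟨v, hv, rfl⟩; exact ⟨tr v, ⟨v, hv, rfl⟩, htrcoe v⟩
    · rintro ⟨t, ⟨v, hv, rfl⟩, rfl⟩; exact ⟨v, hv, (htrcoe v).symm ▸ rfl⟩
  rw [hset, Set.ncard_image_of_injective _ Finset.coe_injective, Set.ncard_coe_finset]
  -- every shattered set has card ≤ 2 and is a subset of Xf
  have hsub : Fam.shatterer ⊆ (Xf.powerset.filter (fun t => t.card ≤ 2)) := by
    intro t ht
    rw [mem_shatterer] at ht
    rw [mem_filter, mem_powerset]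
    constructor
    · obtain ⟨u, hu, htu⟩ := ht.exists_superset
      obtain ⟨v, hv, rfl⟩ := mem_image.mp hu
      exact htu.trans (filter_subset _ _)
    · by_contra hc
      push_neg at hc
      obtain ⟨t', ht't, ht'3⟩ := Finset.exists_subset_card_eq (s := t) (n := 3) hc
      have hsh : Fam.Shatters t' := ht.mono_right ht't
      have htX : (↑t' : Set V) ⊆ X := by
        obtain ⟨u, hu, htu⟩ := ht.exists_superset
        obtain ⟨v, hv, rfl⟩ := mem_image.mp hu
        intro x hx
        have : x ∈ tr v := htu (ht't hx)
        exact (Set.mem_toFinset.mp (mem_filter.mp this).1)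
      refine part1 ↑t' htX (by rw [Set.ncard_coe_finset]; exact ht'3) ?_
      intro Y hY
      have hYfin : Y.Finite := (t'.finite_toSet).subset hY
      obtain ⟨u, hu, hut⟩ := hsh (t := hYfin.toFinset) (by
        intro x hx
        exact hY (hYfin.mem_toFinset.mp hx))
      obtain ⟨v, hv, rfl⟩ := mem_image.mp hu
      refine ⟨v, Set.mem_toFinset.mp hv, ?_⟩
      have : (↑(t' ∩ tr v) : Set V) = Y := by rw [hut]; exact hYfin.coe_toFinset
      rw [← this, Finset.coe_inter, htrcoe v, Set.inter_comm]
  calc Fam.card ≤ Fam.shatterer.card := Fam.card_le_card_shatterer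
    _ ≤ (Xf.powerset.filter (fun t => t.card ≤ 2)).card := card_le_card hsub
    _ ≤ X.ncard.choose 2 + X.ncard + 1 := by
        have h1 : (Xf.powerset.filter (fun t => t.card ≤ 2)) ⊆
            Xf.powersetCard 0 ∪ Xf.powersetCard 1 ∪ Xf.powersetCard 2 := by
          intro t ht
          rw [mem_filter, mem_powerset] at ht
          simp only [mem_union, mem_powersetCard]
          have h3 : t.card = 0 ∨ t.card = 1 ∨ t.card = 2 := by omega
          tauto
        have h2 : X.ncard = Xf.card := by rw [hXf, Set.ncard_eq_toFinset_card']
        calc _ ≤ _ := card_le_card h1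
          _ ≤ (Xf.powersetCard 0 ∪ Xf.powersetCard 1).card + (Xf.powersetCard 2).card :=
              card_union_le _ _
          _ ≤ (Xf.powersetCard 0).card + (Xf.powersetCard 1).card + (Xf.powersetCard 2).card :=
              by exact Nat.add_le_add_right (card_union_le _ _) _
          _ = 1 + Xf.card + Xf.card.choose 2 := by
              simp [card_powersetCard, Nat.choose_zero_right, Nat.choose_one_right]
          _ = X.ncard.choose 2 + X.ncard + 1 := by rw [h2]; ring
end
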